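/- arXiv:2106.07859 — 7 statements merged into one kernel-verified Lean document; each statement's English description precedes it below -/
import Mathlib

section
/- Let Z : [0,T] → ℝ be continuous, let σ : [0,T]×E → A be such that t ↦ σ(t,e) is continuous for each e, let u : [0,T]×E → ℝ be continuously differentiable in t and solve the HJB equation u̇(t,e) + Ĥ(t,e,Z_t,u(t,·)) = 0, and let p : [0,T] → ℝ^E be continuously differentiable and solve the Kolmogorov forward equation ṗ(t,e) = Σ_{e'∈E} q_{e',e}(σ(t,e'), Z_t) p(t,e'). Then for every t ∈ [0,T]: d/dt [Σ_{e∈E} p(t,e) u(t,e)] = Σ_{e∈E} p(t,e) [ H(t,e,Z_t,u(t,·),σ(t,e)) − f(t,e,Z_t,σ(t,e)) − Ĥ(t,e,Z_t,u(t,·)) ]. -/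
open Set

/-- Product-rule identity along the coupled HJB/Kolmogorov system: if `u` solves the HJB
equation `u̇(t,e) + Ĥ(t,e,Z_t,u(t,·)) = 0` and `p` solves the Kolmogorov forward equation
with rates `q_{e',e}(σ(t,e'),Z_t)`, then for every `t ∈ [0,T]`,
`d/dt Σ_e p(t,e)u(t,e) = Σ_e p(t,e)[H(t,e,Z_t,u(t,·),σ(t,e)) − f(t,e,Z_t,σ(t,e)) − Ĥ(t,e,Z_t,u(t,·))]`. -/
theorem stmt_1 (n : ℕ) (hn : 2 ≤ n) (T : ℝ) (hT : 0 < T)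
    (A : Set ℝ) (hA : IsCompact A) (hAne : A.Nonempty)
    (q : Fin n → Fin n → ℝ → ℝ → ℝ)
    (hQmat : ∀ a ∈ A, ∀ z : ℝ, (∀ i j, i ≠ j → 0 ≤ q i j a z) ∧ ∀ i, ∑ j, q i j a z = 0)
    (hqcont : ∀ i j, Continuous fun v : ℝ × ℝ => q i j v.1 v.2)
    (f : ℝ → Fin n → ℝ → ℝ → ℝ)
    (hfcont : ∀ e, Continuous fun v : ℝ × ℝ × ℝ => f v.1 e v.2.1 v.2.2)
    (Hhat : ℝ → Fin n → ℝ → (Fin n → ℝ) → ℝ)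
    (hHhat : ∀ (t : ℝ) (e : Fin n) (z : ℝ) (h : Fin n → ℝ), ∃ a ∈ A,
      Hhat t e z h = (∑ e', q e e' a z * h e') + f t e z a ∧
      ∀ b ∈ A, Hhat t e z h ≤ (∑ e', q e e' b z * h e') + f t e z b)
    (hHhatcont : ∀ e, Continuous fun v : ℝ × ℝ × (Fin n → ℝ) => Hhat v.1 e v.2.1 v.2.2)
    (Z : ℝ → ℝ) (hZ : ContinuousOn Z (Icc 0 T))
    (σ : ℝ → Fin n → ℝ) (hσA : ∀ t ∈ Icc (0:ℝ) T, ∀ e, σ t e ∈ A)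
    (hσcont : ∀ e, ContinuousOn (fun t => σ t e) (Icc 0 T))
    (u u' : ℝ → Fin n → ℝ)
    (hu : ∀ t ∈ Icc (0:ℝ) T, ∀ e, HasDerivWithinAt (fun s => u s e) (u' t e) (Icc 0 T) t)
    (hu'c : ∀ e, ContinuousOn (fun t => u' t e) (Icc 0 T))
    (hHJB : ∀ t ∈ Icc (0:ℝ) T, ∀ e, u' t e + Hhat t e (Z t) (u t) = 0)
    (p : ℝ → Fin n → ℝ)
    (hp : ∀ t ∈ Icc (0:ℝ) T, ∀ e, HasDerivWithinAt (fun s => p s e)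
      (∑ e', q e' e (σ t e') (Z t) * p t e') (Icc 0 T) t) :
    ∀ t ∈ Icc (0:ℝ) T,
      HasDerivWithinAt (fun s => ∑ e, p s e * u s e)
        (∑ e, p t e *
          (((∑ e', q e e' (σ t e) (Z t) * u t e') + f t e (Z t) (σ t e))
            - f t e (Z t) (σ t e) - Hhat t e (Z t) (u t)))
        (Icc 0 T) t := by
  intro t ht
  have hd : HasDerivWithinAt (fun s => ∑ e, p s e * u s e)
      (∑ e, ((∑ e', q e' e (σ t e') (Z t) * p t e') * u t e + p t e * u' t e))
      (Icc 0 T) t :=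
    HasDerivWithinAt.fun_sum fun e _ => (hp t ht e).mul (hu t ht e)
  have hHJB' : ∀ e, u' t e = -Hhat t e (Z t) (u t) := fun e => by
    have := hHJB t ht e; linarith
  have key : ∑ e, ((∑ e', q e' e (σ t e') (Z t) * p t e') * u t e)
      = ∑ e, p t e * (∑ e', q e e' (σ t e) (Z t) * u t e') := by
    simp_rw [Finset.sum_mul, Finset.mul_sum]
    rw [Finset.sum_comm]
    exact Finset.sum_congr rfl fun e _ => Finset.sum_congr rfl fun e' _ => by ring
  convert hd using 1
  rw [Finset.sum_add_distrib, key]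
  simp only [hHJB']
  rw [← Finset.sum_add_distrib]
  exact Finset.sum_congr rfl fun e _ => by ring
end

section
/- (Deterministic form of the verification theorem.) Let Z : [0,T] → ℝ be continuous, let σ : [0,T]×E → A be such that t ↦ σ(t,e) is continuous for each e, let u : [0,T]×E → ℝ be continuously differentiable in t and solve the HJB equation u̇(t,e) + Ĥ(t,e,Z_t,u(t,·)) = 0 with terminal condition u(T,e) = g(e, Z_T), and let p : [0,T] → ℝ^E be continuously differentiable with ṗ(t,e) = Σ_{e'∈E} q_{e',e}(σ(t,e'), Z_t) p(t,e') and with p(0) = p₀ a probability vector (so that p(t) is a probability vector for all t). Then Σ_{e∈E} p₀(e) u(0,e) ≤ ∫₀^T Σ_{e∈E} p(t,e) f(t,e,Z_t,σ(t,e)) dt + Σ_{e∈E} p(T,e) g(e, Z_T). (The left-hand side equals the expected optimal cost of the associated jump process and the right-hand side equals its expected cost under the feedback control σ.) -/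
open Set

open Filter Topology


lemma max_sub_max_le_aux (a b : ℝ) : max a 0 - max b 0 ≤ max (a - b) 0 := by
  have h1 : a ≤ max (a - b) 0 + max b 0 := by
    have := add_le_add (le_max_left (a - b) 0) (le_max_left b 0); linarith
  have h2 : (0:ℝ) ≤ max (a - b) 0 + max b 0 :=
    add_nonneg (le_max_right _ _) (le_max_right _ _)
  have := max_le h1 h2
  linarith

lemma ode_nonneg_aux {n : ℕ} {T : ℝ} (hT : 0 < T) (c : ℝ → Fin n → Fin n → ℝ)
    {C : ℝ} (hC : 0 ≤ C) (hbound : ∀ t ∈ Icc (0:ℝ) T, ∀ e' e, |c t e' e| ≤ C)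
    (hoff : ∀ t ∈ Icc (0:ℝ) T, ∀ e' e, e' ≠ e → 0 ≤ c t e' e)
    (p : ℝ → Fin n → ℝ)
    (hp : ∀ t ∈ Icc (0:ℝ) T, ∀ e, HasDerivWithinAt (fun s => p s e)
      (∑ e', c t e' e * p t e') (Icc 0 T) t)
    (hp0 : ∀ e, 0 ≤ p 0 e) : ∀ t ∈ Icc (0:ℝ) T, ∀ e, 0 ≤ p t e := by
  set N : ℝ → ℝ := fun t => ∑ e, max (-(p t e)) 0 with hN
  have hpc : ∀ e, ContinuousOn (fun t => p t e) (Icc 0 T) :=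
    fun e t ht => (hp t ht e).continuousWithinAt
  have hNc : ContinuousOn N (Icc 0 T) :=
    continuousOn_finset_sum _ fun e _ => ((hpc e).neg).sup continuousOn_const
  have hN0 : N 0 = 0 := Finset.sum_eq_zero fun e _ => max_eq_right (by linarith [hp0 e])
  have hNnn : ∀ t, 0 ≤ N t := fun t => Finset.sum_nonneg fun e _ => le_max_right _ _
  set K : ℝ := (n : ℝ) * C with hKdef
  have hK0 : 0 ≤ K := mul_nonneg (Nat.cast_nonneg n) hC
  -- key slope estimate
  have hslope : ∀ x ∈ Ico (0:ℝ) T, ∀ r, K * N x < r →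
      ∃ᶠ z in 𝓝[>] x, slope N x z < r := by
    intro x hx r hr
    have hxI : x ∈ Icc (0:ℝ) T := Ico_subset_Icc_self hx
    have hle : 𝓝[>] x ≤ 𝓝[Ioc x T] x :=
      nhdsWithin_le_of_mem (Ioc_mem_nhdsGT_of_mem ⟨le_rfl, hx.2⟩)
    set S : Finset (Fin n) := Finset.univ.filter (fun e => p x e ≤ 0) with hS
    have hIoc_sub : Ioc x T ⊆ Icc 0 T \ {x} := fun z hz =>
      ⟨⟨le_trans hx.1 hz.1.le, hz.2⟩, by simp only [Set.mem_singleton_iff]; exact ne_of_gt hz.1⟩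
    have htend : ∀ e, Tendsto (fun z => slope (fun s => p s e) x z) (𝓝[Ioc x T] x)
        (𝓝 (∑ e', c x e' e * p x e')) := fun e =>
      (hasDerivWithinAt_iff_tendsto_slope.1 (hp x hxI e)).mono_left (nhdsWithin_mono _ hIoc_sub)
    have hsum_tend : Tendsto
        (fun z => ∑ e ∈ S, max (-(slope (fun s => p s e) x z)) 0) (𝓝[Ioc x T] x)
        (𝓝 (∑ e ∈ S, max (-(∑ e', c x e' e * p x e')) 0)) :=
      tendsto_finset_sum _ fun e _ => ((htend e).neg).max tendsto_const_nhds
    have hlim_lt : ∑ e ∈ S, max (-(∑ e', c x e' e * p x e')) 0 < r := by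
      refine lt_of_le_of_lt ?_ hr
      have hterm : ∀ e ∈ S, max (-(∑ e', c x e' e * p x e')) 0 ≤ C * N x := by
        intro e he
        have hpe : p x e ≤ 0 := by simpa [hS] using he
        have hD : -(∑ e', c x e' e * p x e') ≤ C * N x := by
          have h0 : -(∑ e', c x e' e * p x e') = ∑ e', -(c x e' e * p x e') := by simp
          have h1 : C * N x = ∑ e', C * max (-(p x e')) 0 := by
            show C * ∑ e', max (-(p x e')) 0 = _
            rw [Finset.mul_sum]
          rw [h0, h1]
          refine Finset.sum_le_sum fun e' _ => ?_
          by_cases hee : e' = e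
          · subst hee
            rw [max_eq_left (neg_nonneg.2 hpe), ← mul_neg]
            exact mul_le_mul_of_nonneg_right ((le_abs_self _).trans (hbound x hxI e' e'))
              (neg_nonneg.2 hpe)
          · have hc : 0 ≤ c x e' e := hoff x hxI e' e hee
            rw [← mul_neg]
            calc c x e' e * (-(p x e')) ≤ c x e' e * max (-(p x e')) 0 :=
                  mul_le_mul_of_nonneg_left (le_max_left _ _) hc
              _ ≤ C * max (-(p x e')) 0 :=
                  mul_le_mul_of_nonneg_right ((le_abs_self _).trans (hbound x hxI e' e))
                    (le_max_right _ _)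
        exact max_le hD (mul_nonneg hC (hNnn x))
      calc ∑ e ∈ S, max (-(∑ e', c x e' e * p x e')) 0 ≤ ∑ _e ∈ S, C * N x :=
            Finset.sum_le_sum hterm
        _ = (S.card : ℝ) * (C * N x) := by rw [Finset.sum_const, nsmul_eq_mul]
        _ ≤ (n : ℝ) * (C * N x) := by
            refine mul_le_mul_of_nonneg_right ?_ (mul_nonneg hC (hNnn x))
            exact_mod_cast (Finset.card_le_card (Finset.subset_univ S)).trans_eq
              (by simp)
        _ = K * N x := by rw [hKdef, mul_assoc]
    have h1 : ∀ᶠ z in 𝓝[Ioc x T] x,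
        ∑ e ∈ S, max (-(slope (fun s => p s e) x z)) 0 < r :=
      hsum_tend (Iio_mem_nhds hlim_lt)
    have h2 : ∀ᶠ z in 𝓝[Ioc x T] x, ∀ e, e ∉ S → 0 < p z e := by
      rw [eventually_all]
      intro e
      by_cases he : e ∈ S
      · exact Eventually.of_forall fun z hne => absurd he hne
      · have hpos : 0 < p x e := by
          by_contra h
          exact he (by simp [hS]; linarith)
        have htd : Tendsto (fun z => p z e) (𝓝[Ioc x T] x) (𝓝 (p x e)) :=
          (hpc e x hxI).mono fun z hz => (hIoc_sub hz).1
        exact (htd.eventually (eventually_gt_nhds hpos)).mono fun z hz _ => hz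
    have h3 : ∀ᶠ z in 𝓝[Ioc x T] x, z ∈ Ioc x T := eventually_mem_nhdsWithin
    have hev : ∀ᶠ z in 𝓝[Ioc x T] x, slope N x z < r := by
      filter_upwards [h1, h2, h3] with z hz1 hz2 hz3
      have hzx : 0 < z - x := sub_pos.2 hz3.1
      have hstep : N z - N x ≤ ∑ e ∈ S, max (p x e - p z e) 0 := by
        have hsplit : N z - N x = ∑ e, (max (-(p z e)) 0 - max (-(p x e)) 0) := by
          rw [hN, ← Finset.sum_sub_distrib]
        rw [hsplit]
        have hμ : ∀ e : Fin n, (max (-(p z e)) 0 - max (-(p x e)) 0) ≤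
            if p x e ≤ 0 then max (p x e - p z e) 0 else 0 := by
          intro e
          by_cases he : p x e ≤ 0
          · simp only [he, if_true]
            have h0 := max_sub_max_le_aux (-(p z e)) (-(p x e))
            have h1 : -(p z e) - -(p x e) = p x e - p z e := by ring
            rwa [h1] at h0
          · simp only [he, if_false]
            push_neg at he
            have hz2e : 0 < p z e := hz2 e (by simp [hS]; linarith)
            rw [max_eq_right (by linarith : -(p z e) ≤ 0),
              max_eq_right (by linarith : -(p x e) ≤ 0)]
            simp
        calc ∑ e, (max (-(p z e)) 0 - max (-(p x e)) 0)
            ≤ ∑ e, if p x e ≤ 0 then max (p x e - p z e) 0 else 0 :=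
              Finset.sum_le_sum fun e _ => hμ e
          _ = ∑ e ∈ S, max (p x e - p z e) 0 := (Finset.sum_filter _ _).symm
      have hslopeN : slope N x z = (N z - N x) / (z - x) := by
        rw [slope_def_field]
      rw [hslopeN]
      calc (N z - N x) / (z - x) ≤ (∑ e ∈ S, max (p x e - p z e) 0) / (z - x) := by
            exact div_le_div_of_nonneg_right hstep hzx.le
        _ = ∑ e ∈ S, max (-(slope (fun s => p s e) x z)) 0 := by
            rw [Finset.sum_div]
            refine Finset.sum_congr rfl fun e _ => ?_
            rw [slope_def_field, ← max_div_div_right hzx.le, zero_div]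
            congr 1
            field_simp
            ring
        _ < r := hz1
    exact ((hev.filter_mono hle)).frequently
  -- fencing with exponential barriers
  have main : ∀ ε : ℝ, 0 < ε → ∀ t ∈ Icc (0:ℝ) T, N t ≤ ε * Real.exp ((K + 1) * t) := by
    intro ε hε
    have hB : ∀ x : ℝ, HasDerivAt (fun t => ε * Real.exp ((K + 1) * t))
        (ε * ((K + 1) * Real.exp ((K + 1) * x))) x := by
      intro x
      have h1 : HasDerivAt (fun t : ℝ => (K + 1) * t) (K + 1) x := by
        simpa using (hasDerivAt_id x).const_mul (K + 1)
      have h2 := h1.exp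
      have := h2.const_mul ε
      rw [mul_comm (K + 1) (Real.exp ((K + 1) * x))]
      exact this
    intro t ht
    refine image_le_of_liminf_slope_right_lt_deriv_boundary (f' := fun x => K * N x)
      hNc hslope ?_ hB ?_ ht
    · rw [hN0]
      positivity
    · intro x hx hNx
      show K * N x < ε * ((K + 1) * Real.exp ((K + 1) * x))
      rw [hNx]
      have hBe : 0 < ε * Real.exp ((K + 1) * x) := by positivity
      nlinarith
  have hNle : ∀ t ∈ Icc (0:ℝ) T, N t ≤ 0 := by
    intro t ht
    by_contra h
    push_neg at h
    set E : ℝ := Real.exp ((K + 1) * t) with hE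
    have hEpos : 0 < E := Real.exp_pos _
    have := main (N t / (2 * E)) (by positivity) t ht
    have h2 : N t / (2 * E) * E = N t / 2 := by field_simp
    rw [h2] at this
    linarith
  intro t ht e
  have h1 : max (-(p t e)) 0 ≤ N t := by
    show _ ≤ ∑ e', max (-(p t e')) 0
    exact Finset.single_le_sum (f := fun e' => max (-(p t e')) 0)
      (fun e' _ => le_max_right _ _) (Finset.mem_univ e)
  have := (le_max_left (-(p t e)) 0).trans (h1.trans (hNle t ht))
  linarith

/-- Deterministic form of the verification theorem: along any admissible feedback `σ`,
`Σ_e p₀(e)u(0,e) ≤ ∫₀^T Σ_e p(t,e) f(t,e,Z_t,σ(t,e)) dt + Σ_e p(T,e) g(e,Z_T)`,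
where `u` solves the HJB equation with terminal datum `g(·,Z_T)` and `p` solves the
Kolmogorov forward equation driven by `σ` starting from the probability vector `p₀`. -/
theorem stmt_2 (n : ℕ) (hn : 2 ≤ n) (T : ℝ) (hT : 0 < T)
    (A : Set ℝ) (hA : IsCompact A) (hAne : A.Nonempty)
    (q : Fin n → Fin n → ℝ → ℝ → ℝ)
    (hQmat : ∀ a ∈ A, ∀ z : ℝ, (∀ i j, i ≠ j → 0 ≤ q i j a z) ∧ ∀ i, ∑ j, q i j a z = 0)
    (hqcont : ∀ i j, Continuous fun v : ℝ × ℝ => q i j v.1 v.2)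
    (f : ℝ → Fin n → ℝ → ℝ → ℝ)
    (hfcont : ∀ e, Continuous fun v : ℝ × ℝ × ℝ => f v.1 e v.2.1 v.2.2)
    (g : Fin n → ℝ → ℝ)
    (Hhat : ℝ → Fin n → ℝ → (Fin n → ℝ) → ℝ)
    (hHhat : ∀ (t : ℝ) (e : Fin n) (z : ℝ) (h : Fin n → ℝ), ∃ a ∈ A,
      Hhat t e z h = (∑ e', q e e' a z * h e') + f t e z a ∧
      ∀ b ∈ A, Hhat t e z h ≤ (∑ e', q e e' b z * h e') + f t e z b)
    (hHhatcont : ∀ e, Continuous fun v : ℝ × ℝ × (Fin n → ℝ) => Hhat v.1 e v.2.1 v.2.2)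
    (Z : ℝ → ℝ) (hZ : ContinuousOn Z (Icc 0 T))
    (σ : ℝ → Fin n → ℝ) (hσA : ∀ t ∈ Icc (0:ℝ) T, ∀ e, σ t e ∈ A)
    (hσcont : ∀ e, ContinuousOn (fun t => σ t e) (Icc 0 T))
    (u u' : ℝ → Fin n → ℝ)
    (hu : ∀ t ∈ Icc (0:ℝ) T, ∀ e, HasDerivWithinAt (fun s => u s e) (u' t e) (Icc 0 T) t)
    (hu'c : ∀ e, ContinuousOn (fun t => u' t e) (Icc 0 T))
    (hHJB : ∀ t ∈ Icc (0:ℝ) T, ∀ e, u' t e + Hhat t e (Z t) (u t) = 0)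
    (huT : ∀ e, u T e = g e (Z T))
    (p : ℝ → Fin n → ℝ)
    (hp : ∀ t ∈ Icc (0:ℝ) T, ∀ e, HasDerivWithinAt (fun s => p s e)
      (∑ e', q e' e (σ t e') (Z t) * p t e') (Icc 0 T) t)
    (hp0pos : ∀ e, 0 ≤ p 0 e) (hp0sum : ∑ e, p 0 e = 1) :
    ∑ e, p 0 e * u 0 e ≤
      (∫ t in (0:ℝ)..T, ∑ e, p t e * f t e (Z t) (σ t e)) + ∑ e, p T e * g e (Z T) := by
  have hCex : ∀ e' e : Fin n, ∃ C, ∀ t ∈ Icc (0:ℝ) T, ‖q e' e (σ t e') (Z t)‖ ≤ C :=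
    fun e' e => isCompact_Icc.exists_bound_of_continuousOn
      ((hqcont e' e).comp_continuousOn ((hσcont e').prodMk hZ) :)
  choose Cm hCm using hCex
  set C : ℝ := ∑ e', ∑ e, max (Cm e' e) 0 with hCdef
  have hC : 0 ≤ C :=
    Finset.sum_nonneg fun _ _ => Finset.sum_nonneg fun _ _ => le_max_right _ _
  have hone : ∀ e' e : Fin n, max (Cm e' e) 0 ≤ C := by
    intro e' e
    have h1 : max (Cm e' e) 0 ≤ ∑ e2, max (Cm e' e2) 0 :=
      Finset.single_le_sum (f := fun e2 => max (Cm e' e2) 0)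
        (fun _ _ => le_max_right _ _) (Finset.mem_univ e)
    have h2 : (∑ e2, max (Cm e' e2) 0) ≤ ∑ e1, ∑ e2, max (Cm e1 e2) 0 :=
      Finset.single_le_sum (f := fun e1 => ∑ e2, max (Cm e1 e2) 0)
        (fun _ _ => Finset.sum_nonneg fun _ _ => le_max_right _ _) (Finset.mem_univ e')
    linarith
  have hbound : ∀ t ∈ Icc (0:ℝ) T, ∀ e' e, |q e' e (σ t e') (Z t)| ≤ C := by
    intro t ht e' e
    have := hCm e' e t ht
    rw [Real.norm_eq_abs] at this
    exact this.trans ((le_max_left _ _).trans (hone e' e))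
  have hoff : ∀ t ∈ Icc (0:ℝ) T, ∀ e' e : Fin n, e' ≠ e → 0 ≤ q e' e (σ t e') (Z t) :=
    fun t ht e' e hne => (hQmat (σ t e') (hσA t ht e') (Z t)).1 e' e hne
  have hpos : ∀ t ∈ Icc (0:ℝ) T, ∀ e, 0 ≤ p t e :=
    ode_nonneg_aux hT (fun t e' e => q e' e (σ t e') (Z t)) hC hbound hoff p hp hp0pos
  have hpc : ∀ e, ContinuousOn (fun t => p t e) (Icc 0 T) :=
    fun e t ht => (hp t ht e).continuousWithinAt
  have huc : ∀ e, ContinuousOn (fun t => u t e) (Icc 0 T) :=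
    fun e t ht => (hu t ht e).continuousWithinAt
  set F : ℝ → ℝ := fun t => ∑ e, p t e * f t e (Z t) (σ t e) with hF
  have hFc : ContinuousOn F (Icc 0 T) := by
    apply continuousOn_finset_sum; intro e _
    exact (hpc e).mul ((hfcont e).comp_continuousOn (continuousOn_id.prodMk (hZ.prodMk (hσcont e))) :)
  set φ : ℝ → ℝ := fun t => (∑ e, p t e * u t e) + ∫ s in (0:ℝ)..t, F s with hφ
  have hφc : ContinuousOn φ (Icc 0 T) := by
    apply ContinuousOn.add
    · exact continuousOn_finset_sum _ fun e _ => (hpc e).mul (huc e)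
    · have h1 : MeasureTheory.IntegrableOn F (uIcc 0 T) := by
        rw [uIcc_of_le hT.le]; exact hFc.integrableOn_Icc
      have := intervalIntegral.continuousOn_primitive_interval h1
      rwa [uIcc_of_le hT.le] at this
  set φ' : ℝ → ℝ := fun x =>
    (∑ e, ((∑ e', q e' e (σ x e') (Z x) * p x e') * u x e + p x e * u' x e)) + F x with hφ'
  have hderiv : ∀ x ∈ interior (Icc (0:ℝ) T),
      HasDerivWithinAt φ (φ' x) (interior (Icc (0:ℝ) T)) x := by
    intro x hx
    rw [interior_Icc] at hx ⊢
    have hxI : x ∈ Icc (0:ℝ) T := Ioo_subset_Icc_self hx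
    have hmem : Icc (0:ℝ) T ∈ 𝓝 x := Icc_mem_nhds hx.1 hx.2
    have h1 : HasDerivAt (fun t => ∑ e, p t e * u t e)
        (∑ e, ((∑ e', q e' e (σ x e') (Z x) * p x e') * u x e + p x e * u' x e)) x := by
      apply HasDerivAt.fun_sum
      intro e _
      exact ((hp x hxI e).hasDerivAt hmem).mul ((hu x hxI e).hasDerivAt hmem)
    have h2 : HasDerivAt (fun t => ∫ s in (0:ℝ)..t, F s) (F x) x := by
      apply intervalIntegral.integral_hasDerivAt_right
      · apply ContinuousOn.intervalIntegrable
        apply hFc.mono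
        rw [uIcc_of_le hx.1.le]
        exact Icc_subset_Icc le_rfl hx.2.le
      · exact ContinuousOn.stronglyMeasurableAtFilter isOpen_Ioo (hFc.mono Ioo_subset_Icc_self) x hx
      · exact (hFc x hxI).continuousAt hmem
    exact (h1.add h2).hasDerivWithinAt
  have hnn : ∀ x ∈ interior (Icc (0:ℝ) T), 0 ≤ φ' x := by
    intro x hx
    rw [interior_Icc] at hx
    have hxI : x ∈ Icc (0:ℝ) T := Ioo_subset_Icc_self hx
    have hkey : ∀ e : Fin n,
        -(p x e * ((∑ e', q e e' (σ x e) (Z x) * u x e') + f x e (Z x) (σ x e)))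
          ≤ p x e * u' x e := by
      intro e
      obtain ⟨a, _, _, hmin⟩ := hHhat x e (Z x) (u x)
      have h1 : Hhat x e (Z x) (u x)
          ≤ (∑ e', q e e' (σ x e) (Z x) * u x e') + f x e (Z x) (σ x e) :=
        hmin (σ x e) (hσA x hxI e)
      have h2 : u' x e = -(Hhat x e (Z x) (u x)) := by linarith [hHJB x hxI e]
      rw [h2, mul_neg, neg_le_neg_iff]
      exact mul_le_mul_of_nonneg_left h1 (hpos x hxI e)
    have hsum : -(∑ e, p x e * ((∑ e', q e e' (σ x e) (Z x) * u x e') + f x e (Z x) (σ x e)))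
        ≤ ∑ e, p x e * u' x e := by
      have h0 : -(∑ e, p x e * ((∑ e', q e e' (σ x e) (Z x) * u x e') + f x e (Z x) (σ x e)))
          = ∑ e, -(p x e * ((∑ e', q e e' (σ x e) (Z x) * u x e') + f x e (Z x) (σ x e))) := by
        simp
      rw [h0]
      exact Finset.sum_le_sum fun e _ => hkey e
    have hswap : ∑ e, (∑ e', q e' e (σ x e') (Z x) * p x e') * u x e
        = ∑ e, p x e * (∑ e', q e e' (σ x e) (Z x) * u x e') := by
      simp_rw [Finset.sum_mul, Finset.mul_sum]
      rw [Finset.sum_comm]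
      exact Finset.sum_congr rfl fun e _ => Finset.sum_congr rfl fun e' _ => by ring
    have hexp : ∑ e, p x e * ((∑ e', q e e' (σ x e) (Z x) * u x e') + f x e (Z x) (σ x e))
        = (∑ e, p x e * (∑ e', q e e' (σ x e) (Z x) * u x e')) + F x := by
      rw [← Finset.sum_add_distrib]
      exact Finset.sum_congr rfl fun e _ => by ring
    rw [hexp] at hsum
    have hsplit : ∑ e, ((∑ e', q e' e (σ x e') (Z x) * p x e') * u x e + p x e * u' x e)
        = (∑ e, (∑ e', q e' e (σ x e') (Z x) * p x e') * u x e) + ∑ e, p x e * u' x e :=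
      Finset.sum_add_distrib
    show 0 ≤ (∑ e, ((∑ e', q e' e (σ x e') (Z x) * p x e') * u x e + p x e * u' x e)) + F x
    rw [hsplit, hswap]
    linarith
  have hmono := monotoneOn_of_hasDerivWithinAt_nonneg (convex_Icc (0:ℝ) T) hφc hderiv hnn
  have hfin := hmono (left_mem_Icc.2 hT.le) (right_mem_Icc.2 hT.le) hT.le
  have hφ0 : φ 0 = ∑ e, p 0 e * u 0 e := by
    show (∑ e, p 0 e * u 0 e) + ∫ s in (0:ℝ)..(0:ℝ), F s = _
    rw [intervalIntegral.integral_same, add_zero]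
  have hφT : φ T = (∑ e, p T e * g e (Z T)) + ∫ s in (0:ℝ)..T, F s := by
    show (∑ e, p T e * u T e) + ∫ s in (0:ℝ)..T, F s = _
    congr 1
    exact Finset.sum_congr rfl fun e _ => by rw [huT e]
  rw [hφ0, hφT] at hfin
  linarith
end

section
/- (Equality case of the verification theorem: optimality of the Hamiltonian-minimizing feedback.) Let Z : [0,T] → ℝ be continuous, let u : [0,T]×E → ℝ be continuously differentiable in t and solve the HJB equation u̇(t,e) + Ĥ(t,e,Z_t,u(t,·)) = 0 with u(T,e) = g(e, Z_T), and suppose the feedback σ̂(t,e) := â_e(t, Z_t, u(t,·)) is continuous in t for each e. Let p : [0,T] → ℝ^E be continuously differentiable with ṗ(t,e) = Σ_{e'∈E} q_{e',e}(σ̂(t,e'), Z_t) p(t,e') and p(0) = p₀ a probability vector. Then Σ_{e∈E} p₀(e) u(0,e) = ∫₀^T Σ_{e∈E} p(t,e) f(t,e,Z_t,σ̂(t,e)) dt + Σ_{e∈E} p(T,e) g(e, Z_T). -/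
open Set

/-- Equality case of the verification theorem (optimality of the Hamiltonian-minimizing
feedback): with `σ̂(t,e) := â_e(t,Z_t,u(t,·))` the minimizer of the Hamiltonian,
`Σ_e p₀(e)u(0,e) = ∫₀^T Σ_e p(t,e) f(t,e,Z_t,σ̂(t,e)) dt + Σ_e p(T,e) g(e,Z_T)`. -/
theorem stmt_3 (n : ℕ) (hn : 2 ≤ n) (T : ℝ) (hT : 0 < T)
    (A : Set ℝ) (hA : IsCompact A) (hAne : A.Nonempty)
    (q : Fin n → Fin n → ℝ → ℝ → ℝ)
    (hQmat : ∀ a ∈ A, ∀ z : ℝ, (∀ i j, i ≠ j → 0 ≤ q i j a z) ∧ ∀ i, ∑ j, q i j a z = 0)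
    (hqcont : ∀ i j, Continuous fun v : ℝ × ℝ => q i j v.1 v.2)
    (f : ℝ → Fin n → ℝ → ℝ → ℝ)
    (hfcont : ∀ e, Continuous fun v : ℝ × ℝ × ℝ => f v.1 e v.2.1 v.2.2)
    (g : Fin n → ℝ → ℝ)
    -- `ahat t e z h` is the (unique) minimizer over `A` of the Hamiltonian
    (ahat : ℝ → Fin n → ℝ → (Fin n → ℝ) → ℝ)
    (hahat : ∀ (t : ℝ) (e : Fin n) (z : ℝ) (h : Fin n → ℝ), ahat t e z h ∈ A ∧
      ∀ b ∈ A, (∑ e', q e e' (ahat t e z h) z * h e') + f t e z (ahat t e z h) ≤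
        (∑ e', q e e' b z * h e') + f t e z b)
    -- the minimized Hamiltonian
    (Hhat : ℝ → Fin n → ℝ → (Fin n → ℝ) → ℝ)
    (hHhatdef : ∀ (t : ℝ) (e : Fin n) (z : ℝ) (h : Fin n → ℝ),
      Hhat t e z h = (∑ e', q e e' (ahat t e z h) z * h e') + f t e z (ahat t e z h))
    (hHhatcont : ∀ e, Continuous fun v : ℝ × ℝ × (Fin n → ℝ) => Hhat v.1 e v.2.1 v.2.2)
    (Z : ℝ → ℝ) (hZ : ContinuousOn Z (Icc 0 T))
    (u u' : ℝ → Fin n → ℝ)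
    (hu : ∀ t ∈ Icc (0:ℝ) T, ∀ e, HasDerivWithinAt (fun s => u s e) (u' t e) (Icc 0 T) t)
    (hu'c : ∀ e, ContinuousOn (fun t => u' t e) (Icc 0 T))
    (hHJB : ∀ t ∈ Icc (0:ℝ) T, ∀ e, u' t e + Hhat t e (Z t) (u t) = 0)
    (huT : ∀ e, u T e = g e (Z T))
    -- the feedback `σ̂(t,e) = â_e(t,Z_t,u(t,·))` is continuous in time
    (hσcont : ∀ e, ContinuousOn (fun t => ahat t e (Z t) (u t)) (Icc 0 T))
    (p : ℝ → Fin n → ℝ)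
    (hp : ∀ t ∈ Icc (0:ℝ) T, ∀ e, HasDerivWithinAt (fun s => p s e)
      (∑ e', q e' e (ahat t e' (Z t) (u t)) (Z t) * p t e') (Icc 0 T) t)
    (hp0pos : ∀ e, 0 ≤ p 0 e) (hp0sum : ∑ e, p 0 e = 1) :
    ∑ e, p 0 e * u 0 e =
      (∫ t in (0:ℝ)..T, ∑ e, p t e * f t e (Z t) (ahat t e (Z t) (u t)))
        + ∑ e, p T e * g e (Z T) := by

  set F : ℝ → ℝ := fun t => ∑ e, p t e * f t e (Z t) (ahat t e (Z t) (u t)) with hF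
  set φ : ℝ → ℝ := fun t => ∑ e, p t e * u t e with hφ
  -- derivative of φ
  have hderiv : ∀ t ∈ Icc (0:ℝ) T, HasDerivWithinAt φ (-(F t)) (Icc 0 T) t := by
    intro t ht
    have hd : HasDerivWithinAt φ
        (∑ e, ((∑ e', q e' e (ahat t e' (Z t) (u t)) (Z t) * p t e') * u t e
          + p t e * u' t e)) (Icc 0 T) t := by
      apply HasDerivWithinAt.fun_sum
      intro e _
      exact (hp t ht e).mul (hu t ht e)
    have key : (∑ e, ((∑ e', q e' e (ahat t e' (Z t) (u t)) (Z t) * p t e') * u t e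
          + p t e * u' t e)) = -(F t) := by
      have hu' : ∀ e, u' t e =
          -((∑ e', q e e' (ahat t e (Z t) (u t)) (Z t) * u t e')
            + f t e (Z t) (ahat t e (Z t) (u t))) := by
        intro e
        have h1 := hHJB t ht e
        rw [hHhatdef] at h1
        linarith
      have hswap : (∑ e, (∑ e', q e' e (ahat t e' (Z t) (u t)) (Z t) * p t e') * u t e)
          = ∑ e, p t e * (∑ e', q e e' (ahat t e (Z t) (u t)) (Z t) * u t e') := by
        rw [show (∑ e, (∑ e', q e' e (ahat t e' (Z t) (u t)) (Z t) * p t e') * u t e)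
            = ∑ e, ∑ e', q e' e (ahat t e' (Z t) (u t)) (Z t) * p t e' * u t e by
          exact Finset.sum_congr rfl fun e _ => Finset.sum_mul _ _ _]
        rw [Finset.sum_comm]
        refine Finset.sum_congr rfl fun e _ => ?_
        rw [Finset.mul_sum]
        exact Finset.sum_congr rfl fun e' _ => by ring
      calc (∑ e, ((∑ e', q e' e (ahat t e' (Z t) (u t)) (Z t) * p t e') * u t e
            + p t e * u' t e))
          = (∑ e, (∑ e', q e' e (ahat t e' (Z t) (u t)) (Z t) * p t e') * u t e)
            + ∑ e, p t e * u' t e := by rw [Finset.sum_add_distrib]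
        _ = (∑ e, p t e * (∑ e', q e e' (ahat t e (Z t) (u t)) (Z t) * u t e'))
            + ∑ e, (-(p t e * (∑ e', q e e' (ahat t e (Z t) (u t)) (Z t) * u t e'))
              - p t e * f t e (Z t) (ahat t e (Z t) (u t))) := by
            rw [hswap]
            congr 1
            refine Finset.sum_congr rfl fun e _ => ?_
            rw [hu' e]; ring
        _ = -(F t) := by
            rw [Finset.sum_sub_distrib, Finset.sum_neg_distrib]
            simp only [hF]
            ring
    rwa [key] at hd
  -- continuity facts
  have hpc : ∀ e, ContinuousOn (fun t => p t e) (Icc 0 T) :=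
    fun e t ht => (hp t ht e).continuousWithinAt
  have huc : ∀ e, ContinuousOn (fun t => u t e) (Icc 0 T) :=
    fun e t ht => (hu t ht e).continuousWithinAt
  have hFc : ContinuousOn F (Icc 0 T) := by
    exact continuousOn_finset_sum _ fun e _ => (hpc e).mul (show ContinuousOn ((fun v : ℝ × ℝ × ℝ => f v.1 e v.2.1 v.2.2) ∘
        (fun t => (t, Z t, ahat t e (Z t) (u t)))) (Icc 0 T) from (hfcont e).comp_continuousOn
      (continuousOn_id.prodMk (hZ.prodMk (hσcont e))))
  have hφc : ContinuousOn φ (Icc 0 T) :=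
    continuousOn_finset_sum _ fun e _ => (hpc e).mul (huc e)
  have hint : IntervalIntegrable (fun t => -(F t)) MeasureTheory.volume 0 T := by
    apply ContinuousOn.intervalIntegrable
    rw [uIcc_of_le hT.le]
    exact hFc.neg
  have hftc : ∫ t in (0:ℝ)..T, -(F t) = φ T - φ 0 := by
    apply intervalIntegral.integral_eq_sub_of_hasDeriv_right_of_le hT.le hφc _ hint
    intro t ht
    exact ((hderiv t (mem_Icc_of_Ioo ht)).hasDerivAt
      (Icc_mem_nhds ht.1 ht.2)).hasDerivWithinAt
  rw [intervalIntegral.integral_neg] at hftc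
  have hφT : φ T = ∑ e, p T e * g e (Z T) :=
    Finset.sum_congr rfl fun e _ => by rw [huT e]
  have : φ 0 = (∫ t in (0:ℝ)..T, F t) + φ T := by linarith
  rw [hφT] at this
  exact this
end

section
/- (Regularity of the optimal control.) Assume A ⊂ ℝ is a compact interval, Q(a,z) = Q₁(z) + a Q₂(z) with Q₂ locally Lipschitz, a ↦ f(t,e,z,a) is continuously differentiable and λ-strongly convex uniformly in (t,e,z), and (t,z) ↦ ∂_a f(t,e,z,a) is locally Lipschitz uniformly in (a,e). Then for every e ∈ E the map (t,z,h) ↦ â_e(t,z,h) is continuous on [0,T]×ℝ×ℝ^E; moreover it is locally Lipschitz continuous, i.e., for all positive constants C_z and C_h, the map (t,z,h) ↦ â_e(t,z,h) is Lipschitz continuous on [0,T] × [−C_z, C_z] × [−C_h, C_h]^E (with a Lipschitz constant possibly depending on T, C_z, C_h). -/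
open Set


lemma aff_convexOn (s : Set ℝ) (hs : Convex ℝ s) (c m : ℝ) :
    ConvexOn ℝ s (fun a => c + a * m) := by
  refine ⟨hs, ?_⟩
  intro x hx y hy a b ha hb hab
  simp only [smul_eq_mul]
  have hb' : b = 1 - a := by linarith
  subst hb'
  apply le_of_eq; ring

lemma quarter (lo hi lam : ℝ) (g : ℝ → ℝ)
    (hc : ConvexOn ℝ (Icc lo hi) (fun a => g a - lam/2*a^2))
    {a b : ℝ} (ha : a ∈ Icc lo hi) (hb : b ∈ Icc lo hi)
    (hmin : ∀ x ∈ Icc lo hi, g a ≤ g x) :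
    g a + lam/4*(b-a)^2 ≤ g b := by
  have hmem : (1/2:ℝ) • a + (1/2:ℝ) • b ∈ Icc lo hi :=
    (convex_Icc lo hi) ha hb (by norm_num) (by norm_num) (by norm_num)
  have h2 := hc.2 ha hb (by norm_num : (0:ℝ) ≤ 1/2) (by norm_num : (0:ℝ) ≤ 1/2) (by norm_num)
  have hm := hmin _ hmem
  simp only [smul_eq_mul] at h2 hm
  nlinarith [h2, hm, sq_nonneg (a-b)]

lemma key_est (lo hi lam : ℝ) (hlam : 0 < lam)
    (g₁ g₂ : ℝ → ℝ)
    (hc₁ : ConvexOn ℝ (Icc lo hi) (fun a => g₁ a - lam/2*a^2))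
    (hc₂ : ConvexOn ℝ (Icc lo hi) (fun a => g₂ a - lam/2*a^2))
    {a₁ a₂ : ℝ} (ha₁ : a₁ ∈ Icc lo hi) (ha₂ : a₂ ∈ Icc lo hi)
    (hm₁ : ∀ x ∈ Icc lo hi, g₁ a₁ ≤ g₁ x) (hm₂ : ∀ x ∈ Icc lo hi, g₂ a₂ ≤ g₂ x)
    (D : ℝ) (hD0 : 0 ≤ D)
    (hD : (g₁ a₂ - g₂ a₂) - (g₁ a₁ - g₂ a₁) ≤ D * |a₂ - a₁|) :
    lam/2 * |a₁ - a₂| ≤ D := by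
  have h1 : g₁ a₁ + lam/4*(a₂-a₁)^2 ≤ g₁ a₂ := quarter lo hi lam g₁ hc₁ ha₁ ha₂ hm₁
  have h2 : g₂ a₂ + lam/4*(a₁-a₂)^2 ≤ g₂ a₁ := quarter lo hi lam g₂ hc₂ ha₂ ha₁ hm₂
  have hsq : lam/2 * (a₁ - a₂)^2 ≤ D * |a₂ - a₁| := by nlinarith [h1, h2, hD]
  rcases eq_or_lt_of_le (abs_nonneg (a₁ - a₂)) with hd | hd
  · rw [← hd]; nlinarith
  · have habs : |a₂ - a₁| = |a₁ - a₂| := abs_sub_comm _ _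
    rw [habs] at hsq
    nlinarith [sq_abs (a₁ - a₂), hd, hsq]

set_option maxHeartbeats 1600000 in
theorem stmt_4_aux (n : ℕ) (hn : 2 ≤ n) (T : ℝ) (hT : 0 < T)
    (lo hi : ℝ) (hA : lo ≤ hi)
    (q : Fin n → Fin n → ℝ → ℝ → ℝ) (qmax : ℝ)
    (hqmax : ∀ i j z, ∀ a ∈ Icc lo hi, |q i j a z| ≤ qmax)
    (hQmat : ∀ a ∈ Icc lo hi, ∀ z : ℝ,
      (∀ i j, i ≠ j → 0 ≤ q i j a z) ∧ ∀ i, ∑ j, q i j a z = 0)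
    (Q1 Q2 : ℝ → Fin n → Fin n → ℝ)
    (hqdecomp : ∀ i j (a z : ℝ), q i j a z = Q1 z i j + a * Q2 z i j)
    (hQ2lip : ∀ R > (0:ℝ), ∃ L : ℝ, ∀ i j, ∀ z ∈ Icc (-R) R, ∀ z' ∈ Icc (-R) R,
      |Q2 z i j - Q2 z' i j| ≤ L * |z - z'|)
    (f fa : ℝ → Fin n → ℝ → ℝ → ℝ)
    (hfa : ∀ t e z, ∀ a ∈ Icc lo hi,
      HasDerivWithinAt (fun b => f t e z b) (fa t e z a) (Icc lo hi) a)
    (hfaC : ∀ t e z, ContinuousOn (fun a => fa t e z a) (Icc lo hi))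
    (lam : ℝ) (hlam : 0 < lam)
    (hconv : ∀ t e z, ConvexOn ℝ (Icc lo hi) (fun a => f t e z a - lam / 2 * a ^ 2))
    (hfalip : ∀ R > (0:ℝ), ∃ L : ℝ, ∀ e, ∀ a ∈ Icc lo hi,
      ∀ t ∈ Icc (0:ℝ) T, ∀ t' ∈ Icc (0:ℝ) T, ∀ z ∈ Icc (-R) R, ∀ z' ∈ Icc (-R) R,
        |fa t e z a - fa t' e z' a| ≤ L * (|t - t'| + |z - z'|))
    (ahat : ℝ → Fin n → ℝ → (Fin n → ℝ) → ℝ)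
    (hahat : ∀ (t : ℝ) (e : Fin n) (z : ℝ) (h : Fin n → ℝ), ahat t e z h ∈ Icc lo hi ∧
      ∀ b ∈ Icc lo hi,
        (∑ e', q e e' (ahat t e z h) z * h e') + f t e z (ahat t e z h) ≤
        (∑ e', q e e' b z * h e') + f t e z b) :
    ∀ e : Fin n,
      ContinuousOn (fun v : ℝ × ℝ × (Fin n → ℝ) => ahat v.1 e v.2.1 v.2.2)
        (Icc (0:ℝ) T ×ˢ (univ : Set ℝ) ×ˢ (univ : Set (Fin n → ℝ))) ∧
      ∀ Cz > (0:ℝ), ∀ Ch > (0:ℝ), ∃ L : ℝ,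
        ∀ t ∈ Icc (0:ℝ) T, ∀ t' ∈ Icc (0:ℝ) T,
        ∀ z ∈ Icc (-Cz) Cz, ∀ z' ∈ Icc (-Cz) Cz,
        ∀ h h' : Fin n → ℝ, (∀ e', |h e'| ≤ Ch) → (∀ e', |h' e'| ≤ Ch) →
          |ahat t e z h - ahat t' e z' h'| ≤
            L * (|t - t'| + |z - z'| + ⨆ e' : Fin n, |h e' - h' e'|) := by
  intro e
  have hne : Nonempty (Fin n) := ⟨⟨0, by omega⟩⟩
  -- Part 1 : the local Lipschitz property (second conjunct).
  have hlip : ∀ Cz > (0:ℝ), ∀ Ch > (0:ℝ), ∃ L : ℝ,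
        ∀ t ∈ Icc (0:ℝ) T, ∀ t' ∈ Icc (0:ℝ) T,
        ∀ z ∈ Icc (-Cz) Cz, ∀ z' ∈ Icc (-Cz) Cz,
        ∀ h h' : Fin n → ℝ, (∀ e', |h e'| ≤ Ch) → (∀ e', |h' e'| ≤ Ch) →
          |ahat t e z h - ahat t' e z' h'| ≤
            L * (|t - t'| + |z - z'| + ⨆ e' : Fin n, |h e' - h' e'|) := by
    rcases eq_or_lt_of_le hA with heq | hlohi
    · -- degenerate interval : the control is constant
      subst heq
      have hconst : ∀ t z h, ahat t e z h = lo := by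
        intro t z h
        have := (hahat t e z h).1
        exact le_antisymm this.2 this.1
      intro Cz _ Ch _
      refine ⟨0, ?_⟩
      intro t _ t' _ z _ z' _ h h' _ _
      simp [hconst]
    -- main case : lo < hi
    intro Cz hCz Ch hCh
    obtain ⟨LQ, hLQ⟩ := hQ2lip Cz hCz
    obtain ⟨Lf, hLf⟩ := hfalip Cz hCz
    -- a uniform bound on Q2
    have hq0 : (0:ℝ) ≤ qmax := le_trans (abs_nonneg _) (hqmax e e 0 lo ⟨le_refl _, hA⟩)
    set M : ℝ := 2*qmax/(hi-lo) with hM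
    have hM0 : 0 ≤ M := div_nonneg (by linarith) (by linarith)
    have hQ2bd : ∀ z i j, |Q2 z i j| ≤ M := by
      intro z i j
      have h1 := hqdecomp i j hi z
      have h2 := hqdecomp i j lo z
      have hQ2eq : Q2 z i j = (q i j hi z - q i j lo z)/(hi-lo) := by
        rw [eq_div_iff (by linarith : hi - lo ≠ 0)]
        linear_combination h2 - h1
      rw [hQ2eq, abs_div, abs_of_pos (by linarith : (0:ℝ) < hi - lo), hM,
        div_le_div_iff_of_pos_right (by linarith : (0:ℝ) < hi - lo)]
      calc |q i j hi z - q i j lo z| ≤ |q i j hi z| + |q i j lo z| := abs_sub _ _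
        _ ≤ qmax + qmax := add_le_add (hqmax i j z hi ⟨hA, le_refl _⟩)
            (hqmax i j z lo ⟨le_refl _, hA⟩)
        _ = 2*qmax := by ring
    refine ⟨(2/lam) * ((n:ℝ) * |LQ| * Ch + (n:ℝ)*M + |Lf|), ?_⟩
    intro t ht t' ht' z hz z' hz' h h' hh hh'
    -- abbreviations
    set a₁ := ahat t e z h with ha₁def
    set a₂ := ahat t' e z' h' with ha₂def
    obtain ⟨ha₁, hm₁⟩ := hahat t e z h
    obtain ⟨ha₂, hm₂⟩ := hahat t' e z' h'
    have hsum : ∀ (zz : ℝ) (hh : Fin n → ℝ) (a : ℝ),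
        (∑ e', q e e' a zz * hh e') =
        (∑ e', Q1 zz e e' * hh e') + a * (∑ e', Q2 zz e e' * hh e') := by
      intro zz hh0 a
      rw [Finset.mul_sum, ← Finset.sum_add_distrib]
      refine Finset.sum_congr rfl fun j _ => ?_
      rw [hqdecomp]; ring
    -- convexity of the shifted objectives
    have hgconv : ∀ (tt zz : ℝ) (hh0 : Fin n → ℝ),
        ConvexOn ℝ (Icc lo hi)
          (fun a => ((∑ e', q e e' a zz * hh0 e') + f tt e zz a) - lam/2*a^2) := by
      intro tt zz hh0
      have heqf : (fun a => ((∑ e', q e e' a zz * hh0 e') + f tt e zz a) - lam/2*a^2)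
          = fun a => ((∑ e', Q1 zz e e' * hh0 e') + a * (∑ e', Q2 zz e e' * hh0 e'))
            + (f tt e zz a - lam/2*a^2) := by
        funext a; rw [hsum]; ring
      rw [heqf]
      exact (aff_convexOn _ (convex_Icc lo hi) _ _).add
        (by simpa using hconv tt e zz)
    -- Lipschitz bound on a ↦ f t z a - f t' z' a
    set K : ℝ := Lf * (|t - t'| + |z - z'|) with hK
    have hK0 : 0 ≤ K :=
      le_trans (abs_nonneg _) (hLf e a₁ ha₁ t ht t' ht' z hz z' hz')
    have hF : |(f t e z a₂ - f t' e z' a₂) - (f t e z a₁ - f t' e z' a₁)| ≤ K * |a₂ - a₁| := by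
      have := Convex.norm_image_sub_le_of_norm_hasDerivWithin_le
        (f := fun a => f t e z a - f t' e z' a)
        (f' := fun a => fa t e z a - fa t' e z' a)
        (C := K) (s := Icc lo hi)
        (fun x hx => (hfa t e z x hx).sub (hfa t' e z' x hx))
        (fun x hx => by
          rw [Real.norm_eq_abs]
          exact hLf e x hx t ht t' ht' z hz z' hz')
        (convex_Icc lo hi) ha₁ ha₂
      simpa [Real.norm_eq_abs] using this
    -- sums of Q2 against h
    set S₁ : ℝ := ∑ e', Q2 z e e' * h e' with hS₁
    set S₂ : ℝ := ∑ e', Q2 z' e e' * h' e' with hS₂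
    set S3 : ℝ := ⨆ e' : Fin n, |h e' - h' e'| with hS3def
    have hS3 : ∀ e', |h e' - h' e'| ≤ S3 := by
      intro e'
      rw [hS3def]
      exact le_ciSup (f := fun e'' : Fin n => |h e'' - h' e''|)
        (Set.Finite.bddAbove (Set.finite_range _)) e'
    have hS30 : 0 ≤ S3 := le_trans (abs_nonneg _) (hS3 (Classical.arbitrary _))
    have hSbd : |S₁ - S₂| ≤ (n:ℝ) * (LQ * |z-z'| * Ch + M * S3) := by
      have hterm : ∀ e' : Fin n,
          |Q2 z e e' * h e' - Q2 z' e e' * h' e'| ≤ LQ * |z-z'| * Ch + M * S3 := by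
        intro e'
        have hid : Q2 z e e' * h e' - Q2 z' e e' * h' e'
            = (Q2 z e e' - Q2 z' e e') * h e' + Q2 z' e e' * (h e' - h' e') := by ring
        rw [hid]
        calc |(Q2 z e e' - Q2 z' e e') * h e' + Q2 z' e e' * (h e' - h' e')|
            ≤ |(Q2 z e e' - Q2 z' e e') * h e'| + |Q2 z' e e' * (h e' - h' e')| :=
              abs_add_le _ _
          _ = |Q2 z e e' - Q2 z' e e'| * |h e'| + |Q2 z' e e'| * |h e' - h' e'| := by
              rw [abs_mul, abs_mul]
          _ ≤ (LQ * |z-z'|) * Ch + M * S3 := by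
              refine add_le_add (mul_le_mul (hLQ e e' z hz z' hz') (hh e')
                (abs_nonneg _) ?_) (mul_le_mul (hQ2bd z' e e') (hS3 e')
                (abs_nonneg _) hM0)
              exact le_trans (abs_nonneg _) (hLQ e e' z hz z' hz')
          _ = LQ * |z-z'| * Ch + M * S3 := by ring
      calc |S₁ - S₂| = |∑ e', (Q2 z e e' * h e' - Q2 z' e e' * h' e')| := by
            rw [hS₁, hS₂, ← Finset.sum_sub_distrib]
        _ ≤ ∑ e', |Q2 z e e' * h e' - Q2 z' e e' * h' e'| := Finset.abs_sum_le_sum_abs _ _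
        _ ≤ ∑ _e' : Fin n, (LQ * |z-z'| * Ch + M * S3) := Finset.sum_le_sum fun i _ => hterm i
        _ = (n:ℝ) * (LQ * |z-z'| * Ch + M * S3) := by
            rw [Finset.sum_const, Finset.card_univ, Fintype.card_fin, nsmul_eq_mul]
    -- the difference ψ = g₁ - g₂ evaluated at the two minimizers
    have hψ : (((∑ e', q e e' a₂ z * h e') + f t e z a₂) - ((∑ e', q e e' a₂ z' * h' e') + f t' e z' a₂))
        - (((∑ e', q e e' a₁ z * h e') + f t e z a₁) - ((∑ e', q e e' a₁ z' * h' e') + f t' e z' a₁))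
        = (S₁ - S₂) * (a₂ - a₁)
          + ((f t e z a₂ - f t' e z' a₂) - (f t e z a₁ - f t' e z' a₁)) := by
      rw [hS₁, hS₂, hsum z h a₂, hsum z' h' a₂, hsum z h a₁, hsum z' h' a₁]
      ring
    have hDineq : (((∑ e', q e e' a₂ z * h e') + f t e z a₂) - ((∑ e', q e e' a₂ z' * h' e') + f t' e z' a₂))
        - (((∑ e', q e e' a₁ z * h e') + f t e z a₁) - ((∑ e', q e e' a₁ z' * h' e') + f t' e z' a₁))
        ≤ (|S₁ - S₂| + K) * |a₂ - a₁| := by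
      rw [hψ]
      have e1 : (S₁ - S₂) * (a₂ - a₁) ≤ |S₁ - S₂| * |a₂ - a₁| := by
        rw [← abs_mul]; exact le_abs_self _
      have e2 : (f t e z a₂ - f t' e z' a₂) - (f t e z a₁ - f t' e z' a₁) ≤ K * |a₂ - a₁| :=
        le_trans (le_abs_self _) hF
      nlinarith [e1, e2]
    have hkey : lam/2 * |a₁ - a₂| ≤ |S₁ - S₂| + K :=
      key_est lo hi lam hlam
        (fun a => (∑ e', q e e' a z * h e') + f t e z a)
        (fun a => (∑ e', q e e' a z' * h' e') + f t' e z' a)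
        (hgconv t z h) (hgconv t' z' h') ha₁ ha₂ hm₁ hm₂
        (|S₁ - S₂| + K) (add_nonneg (abs_nonneg _) hK0) hDineq
    -- combine everything
    have hT1 : (0:ℝ) ≤ |t - t'| := abs_nonneg _
    have hT2 : (0:ℝ) ≤ |z - z'| := abs_nonneg _
    have hn0 : (0:ℝ) ≤ (n:ℝ) := Nat.cast_nonneg n
    have step : lam/2 * |a₁ - a₂| ≤ ((n:ℝ) * |LQ| * Ch + (n:ℝ)*M + |Lf|) *
        (|t - t'| + |z - z'| + S3) := by
      have hch : lam/2 * |a₁ - a₂| ≤ (n:ℝ) * (LQ * |z-z'| * Ch + M * S3) + Lf * (|t - t'| + |z - z'|) := by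
        rw [hK] at hkey; linarith [hSbd]
      nlinarith [hch,
        mul_nonneg (mul_nonneg (mul_nonneg hn0 hCh.le) hT2) (sub_nonneg.2 (le_abs_self LQ)),
        mul_nonneg (mul_nonneg (mul_nonneg hn0 (abs_nonneg LQ)) hCh.le) (add_nonneg hT1 hS30),
        mul_nonneg (mul_nonneg hn0 hM0) (add_nonneg hT1 hT2),
        mul_nonneg (abs_nonneg Lf) hS30,
        mul_nonneg (sub_nonneg.2 (le_abs_self Lf)) (add_nonneg hT1 hT2)]
    have h2l : (0:ℝ) < 2/lam := by positivity
    calc |a₁ - a₂| = (2/lam) * (lam/2 * |a₁ - a₂|) := by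
          field_simp
      _ ≤ (2/lam) * (((n:ℝ) * |LQ| * Ch + (n:ℝ)*M + |Lf|) * (|t - t'| + |z - z'| + S3)) :=
          mul_le_mul_of_nonneg_left step h2l.le
      _ = (2/lam) * ((n:ℝ) * |LQ| * Ch + (n:ℝ)*M + |Lf|) * (|t - t'| + |z - z'| + S3) := by
          ring
  refine ⟨?_, hlip⟩
  -- Part 2 : continuity from local Lipschitz
  intro v hv
  rw [Metric.continuousWithinAt_iff]
  intro ε hε
  obtain ⟨t₀, z₀, h₀⟩ := v
  obtain ⟨ht₀, -⟩ := hv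
  set Cz : ℝ := |z₀| + 1 with hCzdef
  set Ch : ℝ := ‖h₀‖ + 1 with hChdef
  obtain ⟨L, hL⟩ := hlip Cz (by positivity) Ch (by positivity)
  refine ⟨min 1 (ε/(3*(|L|+1))), by positivity, ?_⟩
  rintro ⟨t, z, h⟩ ⟨htmem, -⟩ hdist
  simp only [Real.dist_eq]
  have hd1 : dist ((t, z, h) : ℝ × ℝ × (Fin n → ℝ)) (t₀, z₀, h₀) < 1 :=
    lt_of_lt_of_le hdist (min_le_left _ _)
  have hd2 : dist ((t, z, h) : ℝ × ℝ × (Fin n → ℝ)) (t₀, z₀, h₀) < ε/(3*(|L|+1)) :=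
    lt_of_lt_of_le hdist (min_le_right _ _)
  set D : ℝ := dist ((t, z, h) : ℝ × ℝ × (Fin n → ℝ)) (t₀, z₀, h₀) with hD
  have hdt : |t - t₀| ≤ D := by
    rw [← Real.dist_eq, hD, Prod.dist_eq]; exact le_max_left _ _
  have hdzh : dist ((z, h) : ℝ × (Fin n → ℝ)) (z₀, h₀) ≤ D := by
    rw [hD, Prod.dist_eq]; exact le_max_right _ _
  have hdz : |z - z₀| ≤ D := by
    rw [← Real.dist_eq]
    exact le_trans (by rw [Prod.dist_eq]; exact le_max_left _ _) hdzh
  have hdh2 : dist h h₀ ≤ D :=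
    le_trans (by rw [Prod.dist_eq]; exact le_max_right _ _) hdzh
  have hdhe : ∀ e', |h e' - h₀ e'| ≤ D := by
    intro e'
    rw [← Real.dist_eq]
    exact le_trans (dist_le_pi_dist h h₀ e') hdh2
  have hzmem : z ∈ Icc (-Cz) Cz := by
    have : |z| ≤ |z₀| + 1 := by
      have := hdz
      have := abs_sub_abs_le_abs_sub z z₀
      nlinarith [hd1, hdz]
    rw [hCzdef]; exact abs_le.1 this
  have hz0mem : z₀ ∈ Icc (-Cz) Cz := by
    rw [hCzdef]
    constructor <;> [linarith [neg_abs_le z₀]; linarith [le_abs_self z₀]]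
  have hhb : ∀ e', |h e'| ≤ Ch := by
    intro e'
    have h1 : |h₀ e'| ≤ ‖h₀‖ := by
      have := norm_le_pi_norm h₀ e'
      simpa [Real.norm_eq_abs] using this
    have h2 := hdhe e'
    have : |h e'| ≤ |h₀ e'| + |h e' - h₀ e'| := by
      calc |h e'| = |h₀ e' + (h e' - h₀ e')| := by ring_nf
        _ ≤ |h₀ e'| + |h e' - h₀ e'| := abs_add_le _ _
    rw [hChdef]; linarith [hd1]
  have hh0b : ∀ e', |h₀ e'| ≤ Ch := by
    intro e'
    have h1 : |h₀ e'| ≤ ‖h₀‖ := by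
      have := norm_le_pi_norm h₀ e'
      simpa [Real.norm_eq_abs] using this
    rw [hChdef]; linarith
  have hmain := hL t htmem t₀ ht₀ z hzmem z₀ hz0mem h h₀ hhb hh0b
  have hsup : (⨆ e' : Fin n, |h e' - h₀ e'|) ≤ D :=
    ciSup_le fun e' => hdhe e'
  have hsum3 : |t - t₀| + |z - z₀| + (⨆ e' : Fin n, |h e' - h₀ e'|) ≤ 3 * D := by
    linarith [hdt, hdz, hsup]
  have hsum30 : 0 ≤ |t - t₀| + |z - z₀| + (⨆ e' : Fin n, |h e' - h₀ e'|) := by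
    have : (0:ℝ) ≤ ⨆ e' : Fin n, |h e' - h₀ e'| :=
      le_trans (abs_nonneg _) (le_ciSup (f := fun e' : Fin n => |h e' - h₀ e'|)
        (Set.Finite.bddAbove (Set.finite_range _)) (⟨0, by omega⟩ : Fin n))
    positivity
  have hL1 : (0:ℝ) < |L| + 1 := by positivity
  calc |ahat t e z h - ahat t₀ e z₀ h₀|
      ≤ L * (|t - t₀| + |z - z₀| + ⨆ e' : Fin n, |h e' - h₀ e'|) := hmain
    _ ≤ (|L| + 1) * (|t - t₀| + |z - z₀| + ⨆ e' : Fin n, |h e' - h₀ e'|) :=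
        mul_le_mul_of_nonneg_right (by linarith [le_abs_self L]) hsum30
    _ ≤ (|L| + 1) * (3 * D) := mul_le_mul_of_nonneg_left hsum3 hL1.le
    _ < (|L| + 1) * (3 * (ε/(3*(|L|+1)))) := by
        apply mul_lt_mul_of_pos_left _ hL1
        linarith [hd2]
    _ = ε := by field_simp


/-- Regularity of the optimal control: under Condition 3 (affine dependence of the rates
on the action with locally Lipschitz `Q₂`, and a running cost that is continuously
differentiable and `lam`-strongly convex in the action with `(t,z) ↦ ∂_a f` locally
Lipschitz uniformly in `(a,e)`), the Hamiltonian minimizer `â_e(t,z,h)` is continuous on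
`[0,T]×ℝ×ℝ^E` and locally Lipschitz: Lipschitz on `[0,T]×[−C_z,C_z]×[−C_h,C_h]^E` for all
`C_z, C_h > 0`. -/
theorem stmt_4 (n : ℕ) (hn : 2 ≤ n) (T : ℝ) (hT : 0 < T)
    (lo hi : ℝ) (hA : lo ≤ hi)
    (q : Fin n → Fin n → ℝ → ℝ → ℝ) (qmax : ℝ)
    (hqmax : ∀ i j z, ∀ a ∈ Icc lo hi, |q i j a z| ≤ qmax)
    (hQmat : ∀ a ∈ Icc lo hi, ∀ z : ℝ,
      (∀ i j, i ≠ j → 0 ≤ q i j a z) ∧ ∀ i, ∑ j, q i j a z = 0)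
    -- Condition 3 (i): Q(a,z) = Q₁(z) + a Q₂(z), with Q₂ locally Lipschitz
    (Q1 Q2 : ℝ → Fin n → Fin n → ℝ)
    (hqdecomp : ∀ i j (a z : ℝ), q i j a z = Q1 z i j + a * Q2 z i j)
    (hQ2lip : ∀ R > (0:ℝ), ∃ L : ℝ, ∀ i j, ∀ z ∈ Icc (-R) R, ∀ z' ∈ Icc (-R) R,
      |Q2 z i j - Q2 z' i j| ≤ L * |z - z'|)
    -- Condition 3 (ii): regularity and strong convexity of the running cost in the action
    (f fa : ℝ → Fin n → ℝ → ℝ → ℝ)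
    (hfa : ∀ t e z, ∀ a ∈ Icc lo hi,
      HasDerivWithinAt (fun b => f t e z b) (fa t e z a) (Icc lo hi) a)
    (hfaC : ∀ t e z, ContinuousOn (fun a => fa t e z a) (Icc lo hi))
    (lam : ℝ) (hlam : 0 < lam)
    (hconv : ∀ t e z, ConvexOn ℝ (Icc lo hi) (fun a => f t e z a - lam / 2 * a ^ 2))
    (hfalip : ∀ R > (0:ℝ), ∃ L : ℝ, ∀ e, ∀ a ∈ Icc lo hi,
      ∀ t ∈ Icc (0:ℝ) T, ∀ t' ∈ Icc (0:ℝ) T, ∀ z ∈ Icc (-R) R, ∀ z' ∈ Icc (-R) R,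
        |fa t e z a - fa t' e z' a| ≤ L * (|t - t'| + |z - z'|))
    -- `ahat t e z h` is the minimizer over `A` of the Hamiltonian
    (ahat : ℝ → Fin n → ℝ → (Fin n → ℝ) → ℝ)
    (hahat : ∀ (t : ℝ) (e : Fin n) (z : ℝ) (h : Fin n → ℝ), ahat t e z h ∈ Icc lo hi ∧
      ∀ b ∈ Icc lo hi,
        (∑ e', q e e' (ahat t e z h) z * h e') + f t e z (ahat t e z h) ≤
        (∑ e', q e e' b z * h e') + f t e z b) :
    ∀ e : Fin n,
      ContinuousOn (fun v : ℝ × ℝ × (Fin n → ℝ) => ahat v.1 e v.2.1 v.2.2)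
        (Icc (0:ℝ) T ×ˢ (univ : Set ℝ) ×ˢ (univ : Set (Fin n → ℝ))) ∧
      ∀ Cz > (0:ℝ), ∀ Ch > (0:ℝ), ∃ L : ℝ,
        ∀ t ∈ Icc (0:ℝ) T, ∀ t' ∈ Icc (0:ℝ) T,
        ∀ z ∈ Icc (-Cz) Cz, ∀ z' ∈ Icc (-Cz) Cz,
        ∀ h h' : Fin n → ℝ, (∀ e', |h e'| ≤ Ch) → (∀ e', |h' e'| ≤ Ch) →
          |ahat t e z h - ahat t' e z' h'| ≤
            L * (|t - t'| + |z - z'| + ⨆ e' : Fin n, |h e' - h' e'|) :=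
  stmt_4_aux n hn T hT lo hi hA q qmax hqmax hQmat Q1 Q2 hqdecomp hQ2lip f fa hfa hfaC
    lam hlam hconv hfalip ahat hahat
end

section
/- (The Kolmogorov forward equation preserves the probability simplex.) Let Q : [0,T] → ℝ^{n×n} be continuous and such that Q(t) is a Q-matrix for every t ∈ [0,T] (nonnegative off-diagonal entries, each row summing to zero). If p : [0,T] → ℝ^n is differentiable and satisfies ṗ(t,e) = Σ_{e'=1}^n Q(t)_{e',e} p(t,e') for all t and e, and p(0) is a probability vector (nonnegative entries summing to 1), then p(t) is a probability vector for every t ∈ [0,T]. -/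
open Set Filter Topology

/-- The Kolmogorov forward equation preserves the probability simplex: if `Q(t)` is a
continuous family of Q-matrices on `{1,…,n}` and `ṗ(t,e) = Σ_{e'} Q(t)_{e',e} p(t,e')`
with `p(0)` a probability vector, then `p(t)` is a probability vector for all `t ∈ [0,T]`. -/
theorem stmt_10 (n : ℕ) (hn : 2 ≤ n) (T : ℝ) (hT : 0 < T)
    (Q : ℝ → Fin n → Fin n → ℝ)
    (hQcont : ∀ i j, ContinuousOn (fun t => Q t i j) (Icc 0 T))
    (hQoff : ∀ t ∈ Icc (0:ℝ) T, ∀ i j, i ≠ j → 0 ≤ Q t i j)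
    (hQrow : ∀ t ∈ Icc (0:ℝ) T, ∀ i, ∑ j, Q t i j = 0)
    (p : ℝ → Fin n → ℝ)
    (hp : ∀ t ∈ Icc (0:ℝ) T, ∀ e,
      HasDerivWithinAt (fun s => p s e) (∑ e', Q t e' e * p t e') (Icc 0 T) t)
    (hp0pos : ∀ e, 0 ≤ p 0 e) (hp0sum : ∑ e, p 0 e = 1) :
    ∀ t ∈ Icc (0:ℝ) T, (∀ e, 0 ≤ p t e) ∧ ∑ e, p t e = 1 := by
  have hn0 : (0:ℝ) < n := by positivity
  haveI : NeZero n := ⟨by omega⟩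
  -- continuity of each component of p on the interval
  have hpc : ∀ e, ContinuousOn (fun s => p s e) (Icc (0:ℝ) T) := fun e t ht =>
    (hp t ht e).continuousWithinAt
  -- diagonal entries are nonpositive
  have hQdiag : ∀ t ∈ Icc (0:ℝ) T, ∀ i, Q t i i ≤ 0 := by
    intro t ht i
    have h := hQrow t ht i
    have h2 : ∑ j ∈ Finset.univ.erase i, Q t i j ≥ 0 :=
      Finset.sum_nonneg fun j hj => hQoff t ht i j (Finset.ne_of_mem_erase hj).symm
    have h3 : Q t i i + ∑ j ∈ Finset.univ.erase i, Q t i j = 0 := by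
      rw [← h]; rw [Finset.add_sum_erase _ _ (Finset.mem_univ i)]
    linarith
  -- a uniform bound on the entries of Q
  obtain ⟨C, hC0, hC⟩ : ∃ C : ℝ, 0 ≤ C ∧ ∀ i j, ∀ t ∈ Icc (0:ℝ) T, |Q t i j| ≤ C := by
    have h1 : ∀ i j : Fin n, ∃ c : ℝ, ∀ t ∈ Icc (0:ℝ) T, |Q t i j| ≤ c := by
      intro i j
      obtain ⟨c, hc⟩ := isCompact_Icc.exists_bound_of_continuousOn (hQcont i j)
      exact ⟨c, fun t ht => by simpa using hc t ht⟩
    choose c hc using h1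
    refine ⟨∑ i, ∑ j, max (c i j) 0, ?_, ?_⟩
    · exact Finset.sum_nonneg fun i _ => Finset.sum_nonneg fun j _ => le_max_right _ _
    · intro i j t ht
      calc |Q t i j| ≤ c i j := hc i j t ht
        _ ≤ max (c i j) 0 := le_max_left _ _
        _ ≤ ∑ j', max (c i j') 0 :=
            Finset.single_le_sum (f := fun j' => max (c i j') 0)
              (fun j' _ => le_max_right _ _) (Finset.mem_univ j)
        _ ≤ ∑ i', ∑ j', max (c i' j') 0 :=
            Finset.single_le_sum (f := fun i' => ∑ j', max (c i' j') 0)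
              (fun i' _ => Finset.sum_nonneg fun j' _ => le_max_right _ _) (Finset.mem_univ i)
  -- Part 1 : the sum is constant
  have hsum : ∀ t ∈ Icc (0:ℝ) T, ∑ e, p t e = 1 := by
    have hS : ∀ t ∈ Icc (0:ℝ) T,
        HasDerivWithinAt (fun s => ∑ e, p s e) 0 (Icc 0 T) t := by
      intro t ht
      have := HasDerivWithinAt.fun_sum (u := Finset.univ)
        (fun e _ => hp t ht e)
      have hz : (∑ e : Fin n, ∑ e', Q t e' e * p t e') = 0 := by
        rw [Finset.sum_comm]
        simp only [← Finset.sum_mul]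
        -- ∑ e', (∑ e, Q t e' e) * p t e' , but careful: inner sum is over the second index
        have : ∀ e' : Fin n, (∑ e : Fin n, Q t e' e) * p t e' = 0 := by
          intro e'; rw [hQrow t ht e', zero_mul]
        calc (∑ e' : Fin n, (∑ e : Fin n, Q t e' e) * p t e')
            = ∑ e' : Fin n, (0:ℝ) := Finset.sum_congr rfl fun e' _ => this e'
          _ = 0 := by simp
      rwa [hz] at this
    have hScont : ContinuousOn (fun s => ∑ e, p s e) (Icc (0:ℝ) T) :=
      fun t ht => (hS t ht).continuousWithinAt
    have hS' : ∀ t ∈ Ico (0:ℝ) T,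
        HasDerivWithinAt (fun s => ∑ e, p s e) 0 (Ici t) t := by
      intro t ht
      refine (hS t ⟨ht.1, ht.2.le⟩).mono_of_mem_nhdsWithin ?_
      have h1 : Iic T ∈ 𝓝[Ici t] t :=
        mem_nhdsWithin_of_mem_nhds (Iic_mem_nhds ht.2)
      have h2 : Ici t ∈ 𝓝[Ici t] t := self_mem_nhdsWithin
      filter_upwards [h1, h2] with z hz1 hz2
      exact ⟨le_trans ht.1 hz2, hz1⟩
    intro t ht
    have := constant_of_has_deriv_right_zero hScont hS' t ht
    rwa [hp0sum] at this
  -- Part 2 : nonnegativity, via Grönwall on g t = ∑ e, max (-(p t e)) 0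
  set g : ℝ → ℝ := fun t => ∑ e, max (-(p t e)) 0 with hg
  have hgnonneg : ∀ t, 0 ≤ g t := fun t =>
    Finset.sum_nonneg fun e _ => le_max_right _ _
  have hgcont : ContinuousOn g (Icc (0:ℝ) T) := by
    apply continuousOn_finset_sum
    intro e _
    exact fun t ht => ((hpc e t ht).neg).max continuousWithinAt_const
  have hg0 : g 0 = 0 := by
    apply Finset.sum_eq_zero
    intro e _
    exact max_eq_right (neg_nonpos.2 (hp0pos e))
  set K : ℝ := n * C with hK
  -- the liminf slope estimate
  have gkey : ∀ x ∈ Ico (0:ℝ) T, ∀ r : ℝ, K * g x < r →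
      ∃ᶠ z in 𝓝[>] x, (z - x)⁻¹ * (g z - g x) < r := by
    intro x hx r hr
    have hx' : x ∈ Icc (0:ℝ) T := ⟨hx.1, hx.2.le⟩
    have hgx : 0 ≤ g x := hgnonneg x
    have hCgx : 0 ≤ C * g x := mul_nonneg hC0 hgx
    set σ : ℝ := (r - K * g x) / n with hσ
    have hσpos : 0 < σ := div_pos (by linarith) hn0
    have hL : 𝓝[Ioc x T] x = 𝓝[>] x := nhdsWithin_Ioc_eq_nhdsGT hx.2
    have hsub : Ioc x T ⊆ Icc (0:ℝ) T \ {x} := fun z hz =>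
      ⟨⟨le_trans hx.1 hz.1.le, hz.2⟩, hz.1.ne'⟩
    have hsub2 : Ioc x T ⊆ Icc (0:ℝ) T := fun z hz => ⟨le_trans hx.1 hz.1.le, hz.2⟩
    -- per-component eventual slope bound
    have key : ∀ e : Fin n, ∀ᶠ z in 𝓝[>] x,
        (z - x)⁻¹ * (max (-(p z e)) 0 - max (-(p x e)) 0) < C * g x + σ := by
      intro e
      set D : ℝ := ∑ e', Q x e' e * p x e' with hD
      have hslope : Tendsto (fun z => (z - x)⁻¹ * (p z e - p x e)) (𝓝[>] x) (𝓝 D) := by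
        have h1 : Tendsto (slope (fun s => p s e) x) (𝓝[Icc (0:ℝ) T \ {x}] x) (𝓝 D) :=
          hasDerivWithinAt_iff_tendsto_slope.1 (hp x hx' e)
        have h2 : Tendsto (slope (fun s => p s e) x) (𝓝[>] x) (𝓝 D) := by
          rw [← hL]
          exact h1.mono_left (nhdsWithin_mono x hsub)
        refine h2.congr' ?_
        filter_upwards [self_mem_nhdsWithin] with z hz
        rw [slope_def_field, div_eq_inv_mul]
      have hpz : Tendsto (fun z => p z e) (𝓝[>] x) (𝓝 (p x e)) := by
        rw [← hL]
        exact (hpc e x hx').tendsto.mono_left (nhdsWithin_mono x hsub2)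
      rcases le_or_gt (p x e) 0 with hpe | hpe
      · -- p x e ≤ 0
        have hDbound : -D ≤ C * g x := by
          have hterm : ∀ e' : Fin n, -(Q x e' e * p x e') ≤ C * max (-(p x e')) 0 := by
            intro e'
            by_cases he' : e' = e
            · subst he'
              have h1 : 0 ≤ Q x e' e' * p x e' := by
                nlinarith [hQdiag x hx' e']
              have h2 : 0 ≤ C * max (-(p x e')) 0 := mul_nonneg hC0 (le_max_right _ _)
              linarith
            · have hq : 0 ≤ Q x e' e := hQoff x hx' e' e he'
              have hqC : Q x e' e ≤ C := (abs_le.1 (hC e' e x hx')).2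
              calc -(Q x e' e * p x e') = Q x e' e * (-(p x e')) := by ring
                _ ≤ Q x e' e * max (-(p x e')) 0 :=
                    mul_le_mul_of_nonneg_left (le_max_left _ _) hq
                _ ≤ C * max (-(p x e')) 0 :=
                    mul_le_mul_of_nonneg_right hqC (le_max_right _ _)
          calc -D = ∑ e', -(Q x e' e * p x e') := by rw [hD, ← Finset.sum_neg_distrib]
            _ ≤ ∑ e', C * max (-(p x e')) 0 := Finset.sum_le_sum fun e' _ => hterm e'
            _ = C * g x := by rw [hg, Finset.mul_sum]
        have hphiD : max (-D) 0 ≤ C * g x := max_le hDbound hCgx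
        have htend : Tendsto (fun z => max (-((z - x)⁻¹ * (p z e - p x e))) 0)
            (𝓝[>] x) (𝓝 (max (-D) 0)) := (hslope.neg).max tendsto_const_nhds
        have hev : ∀ᶠ z in 𝓝[>] x,
            max (-((z - x)⁻¹ * (p z e - p x e))) 0 < C * g x + σ :=
          htend.eventually_lt_const (by linarith)
        filter_upwards [hev, self_mem_nhdsWithin] with z hz hz2
        have hzx : (0:ℝ) < z - x := sub_pos.2 hz2
        have hfx : max (-(p x e)) 0 = -(p x e) := max_eq_left (neg_nonneg.2 hpe)
        have h1 : max (-(p z e)) 0 - max (-(p x e)) 0 ≤ max (-(p z e) + p x e) 0 := by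
          rw [hfx]
          rcases le_total (-(p z e)) 0 with h | h
          · simp only [max_eq_right h]
            have : -(p z e) + p x e ≤ max (-(p z e) + p x e) 0 := le_max_left _ _
            have h0 : 0 ≤ max (-(p z e) + p x e) 0 := le_max_right _ _
            linarith
          · rw [max_eq_left h]
            have : -(p z e) + p x e ≤ max (-(p z e) + p x e) 0 := le_max_left _ _
            linarith
        calc (z - x)⁻¹ * (max (-(p z e)) 0 - max (-(p x e)) 0)
            ≤ (z - x)⁻¹ * max (-(p z e) + p x e) 0 :=
              mul_le_mul_of_nonneg_left h1 (inv_nonneg.2 hzx.le)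
          _ = max (-((z - x)⁻¹ * (p z e - p x e))) 0 := by
              rw [mul_max_of_nonneg _ _ (inv_nonneg.2 hzx.le), mul_zero]
              congr 1
              ring
          _ < C * g x + σ := hz
      · -- p x e > 0
        have hev : ∀ᶠ z in 𝓝[>] x, 0 < p z e := hpz.eventually_const_lt hpe
        filter_upwards [hev] with z hz
        rw [max_eq_right (neg_nonpos.2 hz.le), max_eq_right (neg_nonpos.2 hpe.le)]
        simp only [sub_zero, mul_zero, sub_self]
        linarith
    -- combine the components
    have hall : ∀ᶠ z in 𝓝[>] x, ∀ e : Fin n,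
        (z - x)⁻¹ * (max (-(p z e)) 0 - max (-(p x e)) 0) < C * g x + σ :=
      eventually_all.2 key
    refine Eventually.frequently ?_
    filter_upwards [hall] with z hz
    have hsum' : (z - x)⁻¹ * (g z - g x)
        = ∑ e, (z - x)⁻¹ * (max (-(p z e)) 0 - max (-(p x e)) 0) := by
      rw [hg]
      rw [← Finset.sum_sub_distrib, Finset.mul_sum]
    rw [hsum']
    have hlt : (∑ e : Fin n, (z - x)⁻¹ * (max (-(p z e)) 0 - max (-(p x e)) 0))
        < ∑ _e : Fin n, (C * g x + σ) :=
      Finset.sum_lt_sum_of_nonempty (Finset.univ_nonempty) fun e _ => hz e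
    have hcard : (∑ _e : Fin n, (C * g x + σ)) = n * (C * g x + σ) := by
      rw [Finset.sum_const, Finset.card_univ, Fintype.card_fin, nsmul_eq_mul]
    have hreq : (n:ℝ) * (C * g x + σ) = r := by
      rw [hσ, hK]
      field_simp
      ring
    rw [hcard, hreq] at hlt
    exact hlt
  have hgron := le_gronwallBound_of_liminf_deriv_right_le
    (f := g) (f' := fun x => K * g x) (δ := 0) (K := K) (ε := 0) (a := 0) (b := T)
    hgcont gkey (by rw [hg0]) (fun x _ => by rw [add_zero])
  intro t ht
  refine ⟨?_, hsum t ht⟩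
  have hgt : g t ≤ 0 := by
    have := hgron t ht
    rwa [gronwallBound_ε0_δ0] at this
  have hgt0 : g t = 0 := le_antisymm hgt (hgnonneg t)
  have hterms := (Finset.sum_eq_zero_iff_of_nonneg
    (fun e _ => le_max_right (-(p t e)) 0)).1 hgt0
  intro e
  have := hterms e (Finset.mem_univ e)
  have h1 : -(p t e) ≤ max (-(p t e)) 0 := le_max_left _ _
  rw [this] at h1
  linarith
end

section
/- (A priori bound for solutions of the HJB equation.) Assume |q_{i,j}(a,z)| ≤ q_max for all i,j ∈ E, a ∈ A, z ∈ ℝ, |f(t,e,z,a)| ≤ C_f, and |g(e,z)| ≤ C_g. Let Z : [0,T] → ℝ be continuous and let u : [0,T]×E → ℝ be continuously differentiable in t and solve u̇(t,e) + Ĥ(t,e,Z_t, Δ_e u(t,·)) = 0 with u(T,e) = g(e, Z_T). Then for all t ∈ [0,T]: max_{e∈E} |u(t,e)| ≤ (C_g + C_f (T − t)) e^{2(n−1) q_max (T − t)}. In particular, |u̇(t,e)| ≤ 2(n−1)q_max (C_g + C_f T) e^{2(n−1)q_max T} + C_f for all (t,e), so u is Lipschitz in t with a constant depending only on n, q_max,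 C_f, C_g, T. -/
open Set

/-- A priori bound for solutions of the HJB equation: if `u` solves
`u̇(t,e) + Ĥ(t,e,Z_t,Δ_e u(t,·)) = 0` with `u(T,e) = g(e,Z_T)`, where the rates are
bounded by `q_max`, `|f| ≤ C_f` and `|g| ≤ C_g`, then
`max_e |u(t,e)| ≤ (C_g + C_f(T−t)) e^{2(n−1)q_max(T−t)}`, and the time derivative of `u`
is bounded by `2(n−1)q_max(C_g + C_f T)e^{2(n−1)q_max T} + C_f`. -/
theorem stmt_11 (n : ℕ) (hn : 2 ≤ n) (T : ℝ) (hT : 0 < T)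
    (A : Set ℝ) (hA : IsCompact A) (hAne : A.Nonempty)
    (q : Fin n → Fin n → ℝ → ℝ → ℝ) (qmax : ℝ)
    (hq : ∀ i j z, ∀ a ∈ A, |q i j a z| ≤ qmax)
    (hQmat : ∀ a ∈ A, ∀ z : ℝ, (∀ i j, i ≠ j → 0 ≤ q i j a z) ∧ ∀ i, ∑ j, q i j a z = 0)
    (f : ℝ → Fin n → ℝ → ℝ → ℝ) (Cf : ℝ) (hf : ∀ t e z, ∀ a ∈ A, |f t e z a| ≤ Cf)
    (g : Fin n → ℝ → ℝ) (Cg : ℝ) (hg : ∀ e z, |g e z| ≤ Cg)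
    (Hhat : ℝ → Fin n → ℝ → (Fin n → ℝ) → ℝ)
    (hHhat : ∀ (t : ℝ) (e : Fin n) (z : ℝ) (h : Fin n → ℝ), ∃ a ∈ A,
      Hhat t e z h = (∑ e', q e e' a z * h e') + f t e z a ∧
      ∀ b ∈ A, Hhat t e z h ≤ (∑ e', q e e' b z * h e') + f t e z b)
    (Z : ℝ → ℝ) (hZ : ContinuousOn Z (Icc 0 T))
    (u u' : ℝ → Fin n → ℝ)
    (hu : ∀ t ∈ Icc (0:ℝ) T, ∀ e, HasDerivWithinAt (fun s => u s e) (u' t e) (Icc 0 T) t)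
    (hu'c : ∀ e, ContinuousOn (fun t => u' t e) (Icc 0 T))
    (hHJB : ∀ t ∈ Icc (0:ℝ) T, ∀ e,
      u' t e + Hhat t e (Z t) (fun e' => u t e' - u t e) = 0)
    (huT : ∀ e, u T e = g e (Z T)) :
    (∀ t ∈ Icc (0:ℝ) T, ∀ e,
      |u t e| ≤ (Cg + Cf * (T - t)) * Real.exp (2 * ((n : ℝ) - 1) * qmax * (T - t))) ∧
    (∀ t ∈ Icc (0:ℝ) T, ∀ e,
      |u' t e| ≤ 2 * ((n : ℝ) - 1) * qmax * (Cg + Cf * T) *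
        Real.exp (2 * ((n : ℝ) - 1) * qmax * T) + Cf) := by
  obtain ⟨a₀, ha₀⟩ := hAne
  have e₀ : Fin n := ⟨0, by omega⟩
  set K : ℝ := 2 * ((n : ℝ) - 1) * qmax with hK
  have hn1 : (1:ℝ) ≤ (n:ℝ) := by exact_mod_cast Nat.one_le_of_lt hn
  have hqmax : 0 ≤ qmax := le_trans (abs_nonneg _) (hq e₀ e₀ 0 a₀ ha₀)
  have hCf : 0 ≤ Cf := le_trans (abs_nonneg _) (hf 0 e₀ 0 a₀ ha₀)
  have hCg : 0 ≤ Cg := le_trans (abs_nonneg _) (hg e₀ 0)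
  have hK0 : 0 ≤ K := by
    have h1 : (0:ℝ) ≤ (n:ℝ) - 1 := by linarith
    have : (0:ℝ) ≤ 2 * ((n:ℝ) - 1) := by linarith
    exact mul_nonneg this hqmax
  -- bound on |u' t e| in terms of ‖u t‖ (sup norm on Fin n → ℝ)
  have Hb : ∀ t ∈ Icc (0:ℝ) T, ∀ e, |u' t e| ≤ K * ‖u t‖ + Cf := by
    intro t ht e
    set h : Fin n → ℝ := fun e' => u t e' - u t e with hh
    obtain ⟨a, haA, hEq, -⟩ := hHhat t e (Z t) h
    have hu'e : u' t e = -Hhat t e (Z t) h := by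
      have := hHJB t ht e; linarith
    have hHe : ∀ e', |h e'| ≤ 2 * ‖u t‖ := by
      intro e'
      have h1 : |u t e'| ≤ ‖u t‖ := norm_le_pi_norm (u t) e'
      have h2 : |u t e| ≤ ‖u t‖ := norm_le_pi_norm (u t) e
      calc |h e'| ≤ |u t e'| + |u t e| := abs_sub _ _
        _ ≤ 2 * ‖u t‖ := by linarith
    have hzero : q e e a (Z t) * h e = 0 := by simp [hh]
    have hsum : |∑ e', q e e' a (Z t) * h e'| ≤ K * ‖u t‖ := by
      have hersum : ∑ e' ∈ Finset.univ.erase e, q e e' a (Z t) * h e' =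
          ∑ e', q e e' a (Z t) * h e' := Finset.sum_erase _ hzero
      rw [← hersum]
      calc |∑ e' ∈ Finset.univ.erase e, q e e' a (Z t) * h e'|
          ≤ ∑ e' ∈ Finset.univ.erase e, |q e e' a (Z t) * h e'| :=
            Finset.abs_sum_le_sum_abs _ _
        _ ≤ ∑ e' ∈ Finset.univ.erase e, qmax * (2 * ‖u t‖) := by
            apply Finset.sum_le_sum
            intro e' _
            rw [abs_mul]
            exact mul_le_mul (hq e e' (Z t) a haA) (hHe e') (abs_nonneg _) hqmax
        _ = ((n : ℝ) - 1) * (qmax * (2 * ‖u t‖)) := by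
            rw [Finset.sum_const, nsmul_eq_mul]
            congr 1
            rw [Finset.card_erase_of_mem (Finset.mem_univ e), Finset.card_univ,
              Fintype.card_fin]
            have : (1:ℕ) ≤ n := by omega
            push_cast [Nat.cast_sub this]
            ring
        _ = K * ‖u t‖ := by rw [hK]; ring
    calc |u' t e| = |Hhat t e (Z t) h| := by rw [hu'e, abs_neg]
      _ = |(∑ e', q e e' a (Z t) * h e') + f t e (Z t) a| := by rw [hEq]
      _ ≤ |∑ e', q e e' a (Z t) * h e'| + |f t e (Z t) a| := abs_add_le _ _
      _ ≤ K * ‖u t‖ + Cf := add_le_add hsum (hf t e (Z t) a haA)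
  -- continuity of u as a map to the pi type
  have hucont : ContinuousOn u (Icc 0 T) := by
    apply continuousOn_pi.2
    intro e t ht
    exact (hu t ht e).continuousWithinAt
  -- the time-reversed function
  set v : ℝ → Fin n → ℝ := fun s => u (T - s) with hv
  have hmaps : MapsTo (fun x : ℝ => T - x) (Icc 0 T) (Icc 0 T) := by
    intro x hx
    simp only [mem_Icc] at hx ⊢
    constructor <;> linarith
  have hvcont : ContinuousOn v (Icc 0 T) := by
    apply hucont.comp (by fun_prop) hmaps
  have hv0 : ‖v 0‖ ≤ Cg := by
    apply (pi_norm_le_iff_of_nonneg hCg).2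
    intro e
    simp only [hv, sub_zero, huT e, Real.norm_eq_abs]
    exact hg e (Z T)
  have hvderiv : ∀ s ∈ Ico (0:ℝ) T,
      HasDerivWithinAt v (fun e => -u' (T - s) e) (Ici s) s := by
    intro s hs
    have hmem : T - s ∈ Icc (0:ℝ) T := ⟨by linarith [hs.2], by linarith [hs.1]⟩
    have : HasDerivWithinAt v (fun e => -u' (T - s) e) (Icc 0 T) s := by
      apply hasDerivWithinAt_pi.2
      intro e
      have h1 : HasDerivWithinAt (fun r => u r e) (u' (T - s) e) (Icc 0 T) (T - s) :=
        hu _ hmem e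
      have h2 : HasDerivWithinAt (fun x : ℝ => T - x) (-1) (Icc 0 T) s :=
        ((hasDerivAt_id s).const_sub T).hasDerivWithinAt
      have := h1.comp s h2 hmaps
      simpa [mul_comm, hv, Function.comp_def] using this
    exact this.mono_of_mem_nhdsWithin (Icc_mem_nhdsGE_of_mem hs)
  have hvbound : ∀ s ∈ Ico (0:ℝ) T, ‖(fun e => -u' (T - s) e : Fin n → ℝ)‖ ≤ K * ‖v s‖ + Cf := by
    intro s hs
    have hmem : T - s ∈ Icc (0:ℝ) T := ⟨by linarith [hs.2], by linarith [hs.1]⟩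
    have hnn : 0 ≤ K * ‖v s‖ + Cf := by positivity
    apply (pi_norm_le_iff_of_nonneg hnn).2
    intro e
    simpa [Real.norm_eq_abs, hv] using Hb (T - s) hmem e
  have gron := norm_le_gronwallBound_of_norm_deriv_right_le hvcont hvderiv hv0 hvbound
  -- gronwallBound ≤ the explicit bound
  have hGB : ∀ τ : ℝ, 0 ≤ τ → gronwallBound Cg K Cf τ ≤ (Cg + Cf * τ) * Real.exp (K * τ) := by
    intro τ hτ
    rcases eq_or_ne K 0 with hK0' | hK0'
    · rw [hK0', gronwallBound_K0, zero_mul, Real.exp_zero, mul_one]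
    · rw [gronwallBound_of_K_ne_0 hK0']
      have hKpos : 0 < K := lt_of_le_of_ne hK0 (Ne.symm hK0')
      have key : Real.exp (K * τ) - 1 ≤ K * τ * Real.exp (K * τ) := by
        have h1 : 1 - K * τ ≤ Real.exp (-(K * τ)) := by
          have := Real.add_one_le_exp (-(K * τ)); linarith
        have h2 : (1 - K * τ) * Real.exp (K * τ) ≤ Real.exp (-(K * τ)) * Real.exp (K * τ) :=
          mul_le_mul_of_nonneg_right h1 (Real.exp_pos _).le
        rw [← Real.exp_add, neg_add_cancel, Real.exp_zero] at h2
        nlinarith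
      have : Cf / K * (Real.exp (K * τ) - 1) ≤ Cf * τ * Real.exp (K * τ) := by
        rw [div_mul_eq_mul_div, div_le_iff₀ hKpos]
        calc Cf * (Real.exp (K * τ) - 1) ≤ Cf * (K * τ * Real.exp (K * τ)) :=
              mul_le_mul_of_nonneg_left key hCf
          _ = Cf * τ * Real.exp (K * τ) * K := by ring
      nlinarith [Real.exp_pos (K * τ)]
  -- the main a priori bound on ‖u t‖
  have main : ∀ t ∈ Icc (0:ℝ) T,
      ‖u t‖ ≤ (Cg + Cf * (T - t)) * Real.exp (K * (T - t)) := by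
    intro t ht
    have hs : T - t ∈ Icc (0:ℝ) T := ⟨by linarith [ht.2], by linarith [ht.1]⟩
    have := gron (T - t) hs
    have hvt : v (T - t) = u t := by simp [hv]
    rw [hvt, sub_zero] at this
    exact this.trans (hGB (T - t) hs.1)
  constructor
  · intro t ht e
    exact (norm_le_pi_norm (u t) e).trans (main t ht)
  · intro t ht e
    have h1 := Hb t ht e
    have h2 := main t ht
    have hτ : T - t ≤ T := by linarith [ht.1]
    have hτ0 : 0 ≤ T - t := by linarith [ht.2]
    have h3 : (Cg + Cf * (T - t)) * Real.exp (K * (T - t)) ≤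
        (Cg + Cf * T) * Real.exp (K * T) := by
      apply mul_le_mul (by nlinarith) (Real.exp_le_exp.2 (by nlinarith)) (Real.exp_pos _).le
        (by nlinarith)
    have h4 : K * ‖u t‖ ≤ K * ((Cg + Cf * T) * Real.exp (K * T)) :=
      mul_le_mul_of_nonneg_left (h2.trans h3) hK0
    calc |u' t e| ≤ K * ‖u t‖ + Cf := h1
      _ ≤ K * ((Cg + Cf * T) * Real.exp (K * T)) + Cf := by linarith
      _ = 2 * ((n : ℝ) - 1) * qmax * (Cg + Cf * T) * Real.exp (2 * ((n : ℝ) - 1) * qmax * T)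
          + Cf := by rw [hK]; ring
end

section
/- (L² stability of the Kolmogorov forward equation with respect to the rates.) Let q, q̃ : I×[0,T] → ℝ^{E×E} be measurable with |q^x_{e',e}(t)| ≤ q_max and |q̃^x_{e',e}(t)| ≤ q_max, continuous in t for almost every x, and let p, p̃ ∈ C([0,T]; L²(I×E)) satisfy, for almost every x, d/dt p^x(t,e) = Σ_{e'∈E} q^x_{e',e}(t) p^x(t,e') and d/dt p̃^x(t,e) = Σ_{e'∈E} q̃^x_{e',e}(t) p̃^x(t,e'), with common initial datum p(0) = p̃(0) = p₀, where p₀^x and hence p^x(t,·), p̃^x(t,·) are probability vectors on E for almost every x and all t. Then there exists a constant C, depending only on n, q_max and T, such that for all s ∈ [0,T]: ∫_I Σ_{e∈E} |p^x(s,e) − p̃^x(s,e)|² dx ≤ C ∫₀^s ∫_I Σ_{e,e'∈E} |q^x_{e',e}(t) − q̃^x_{e',e}(t)|² dx dt. -/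
open MeasureTheory Set

/-- The unit interval `I = [0,1]` with Lebesgue measure. -/
noncomputable def muI : Measure ℝ := volume.restrict (Set.Icc 0 1)

/-- Per-`x` Grönwall estimate. -/
lemma perx_gronwall {n : ℕ} (hn : 0 < n) {T qmax : ℝ} (hT : 0 < T) (hq0 : 0 ≤ qmax)
    (q qt : ℝ → Fin n → Fin n → ℝ) (p pt : ℝ → Fin n → ℝ)
    (hqb : ∀ t e' e, |q t e' e| ≤ qmax) (hqtb : ∀ t e' e, |qt t e' e| ≤ qmax)
    (hqc : ∀ e' e, ContinuousOn (fun t => q t e' e) (Icc 0 T))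
    (hqtc : ∀ e' e, ContinuousOn (fun t => qt t e' e) (Icc 0 T))
    (hdp : ∀ t ∈ Icc (0:ℝ) T, ∀ e,
      HasDerivWithinAt (fun s => p s e) (∑ e', q t e' e * p t e') (Icc 0 T) t)
    (hdpt : ∀ t ∈ Icc (0:ℝ) T, ∀ e,
      HasDerivWithinAt (fun s => pt s e) (∑ e', qt t e' e * pt t e') (Icc 0 T) t)
    (h0 : ∀ e, p 0 e = pt 0 e)
    (hprob : ∀ t ∈ Icc (0:ℝ) T,
      (∀ e, 0 ≤ p t e ∧ 0 ≤ pt t e) ∧ ∑ e, p t e = 1 ∧ ∑ e, pt t e = 1) :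
    ∀ s ∈ Icc (0:ℝ) T, ∑ e, (p s e - pt s e) ^ 2 ≤
      Real.exp ((2*n*qmax+1)*T) *
        ∫ t in (0:ℝ)..s, ∑ e, ∑ e', (q t e' e - qt t e' e) ^ 2 := by
  intro s hs
  set K : ℝ := 2*n*qmax+1 with hK
  have hK1 : (1:ℝ) ≤ K := by
    have : (0:ℝ) ≤ 2*n*qmax := by positivity
    linarith
  have hKpos : (0:ℝ) < K := lt_of_lt_of_le one_pos hK1
  set f : ℝ → ℝ := fun t => ∑ e, (p t e - pt t e) ^ 2 with hf
  set g : ℝ → ℝ := fun t => ∑ e, ∑ e', (q t e' e - qt t e' e) ^ 2 with hg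
  set f' : ℝ → ℝ := fun t => ∑ e, (2 * (p t e - pt t e) *
      ((∑ e', q t e' e * p t e') - ∑ e', qt t e' e * pt t e')) with hf'
  -- f has derivative f'
  have hfd : ∀ t ∈ Icc (0:ℝ) T, HasDerivWithinAt f (f' t) (Icc 0 T) t := by
    intro t ht
    have H := HasDerivWithinAt.fun_sum (u := Finset.univ)
      (fun e _ => (((hdp t ht e).sub (hdpt t ht e)).pow 2))
    convert H using 1
    · rfl
    · rfl
    · rfl
    refine Finset.sum_congr rfl fun e _ => ?_
    push_cast
    simp only [Pi.sub_apply]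
    ring
  have hgnonneg : ∀ t, 0 ≤ g t := by
    intro t; exact Finset.sum_nonneg fun e _ => Finset.sum_nonneg fun e' _ => sq_nonneg _
  have hfnonneg : ∀ t, 0 ≤ f t :=
    fun t => Finset.sum_nonneg fun e _ => sq_nonneg _
  -- the key derivative bound
  have hkey : ∀ t ∈ Icc (0:ℝ) T, f' t ≤ K * f t + g t := by
    intro t ht
    obtain ⟨hnn, hsump, hsumpt⟩ := hprob t ht
    set d : Fin n → ℝ := fun e => p t e - pt t e with hd
    set A : Fin n → ℝ := fun e => ∑ e', q t e' e * d e' with hA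
    set B : Fin n → ℝ := fun e => ∑ e', (q t e' e - qt t e' e) * pt t e' with hB
    have hsplit : f' t = (∑ e, 2 * d e * A e) + ∑ e, 2 * d e * B e := by
      rw [hf', ← Finset.sum_add_distrib]
      refine Finset.sum_congr rfl fun e _ => ?_
      have : (∑ e', q t e' e * p t e') - ∑ e', qt t e' e * pt t e' = A e + B e := by
        rw [hA, hB, ← Finset.sum_add_distrib, ← Finset.sum_sub_distrib]
        refine Finset.sum_congr rfl fun e' _ => ?_
        simp only [hd]; ring
      rw [this]; ring
    have hAb : ∀ e, |A e| ≤ qmax * ∑ e', |d e'| := by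
      intro e
      calc |A e| ≤ ∑ e', |q t e' e * d e'| := Finset.abs_sum_le_sum_abs _ _
        _ ≤ ∑ e', qmax * |d e'| := by
            refine Finset.sum_le_sum fun e' _ => ?_
            rw [abs_mul]
            exact mul_le_mul_of_nonneg_right (hqb t e' e) (abs_nonneg _)
        _ = qmax * ∑ e', |d e'| := by rw [Finset.mul_sum]
    have hterm1 : (∑ e, 2 * d e * A e) ≤ 2 * n * qmax * f t := by
      have h1 : (∑ e, 2 * d e * A e) ≤ ∑ e, 2 * |d e| * (qmax * ∑ e', |d e'|) := by
        refine Finset.sum_le_sum fun e _ => ?_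
        calc 2 * d e * A e ≤ |2 * d e * A e| := le_abs_self _
          _ = 2 * |d e| * |A e| := by rw [abs_mul, abs_mul, abs_two]
          _ ≤ 2 * |d e| * (qmax * ∑ e', |d e'|) := by
              refine mul_le_mul_of_nonneg_left (hAb e) (by positivity)
      have h2 : (∑ e, 2 * |d e| * (qmax * ∑ e', |d e'|))
          = 2 * (∑ e, |d e|) * (qmax * ∑ e', |d e'|) := by
        rw [← Finset.sum_mul, ← Finset.mul_sum]
      have h3 : (∑ e, |d e|) ^ 2 ≤ n * ∑ e, (d e) ^ 2 := by
        have := sq_sum_le_card_mul_sum_sq (s := Finset.univ) (f := fun e : Fin n => |d e|)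
        simpa [sq_abs] using this
      have h4 : 2 * (∑ e, |d e|) * (qmax * ∑ e', |d e'|)
          ≤ 2 * qmax * (n * ∑ e, (d e) ^ 2) := by
        have hSnn : (0:ℝ) ≤ ∑ e, |d e| := Finset.sum_nonneg fun e _ => abs_nonneg _
        nlinarith [h3, sq_nonneg (∑ e, |d e|)]
      calc (∑ e, 2 * d e * A e) ≤ 2 * (∑ e, |d e|) * (qmax * ∑ e', |d e'|) := h2 ▸ h1
        _ ≤ 2 * qmax * (n * ∑ e, (d e) ^ 2) := h4
        _ = 2 * n * qmax * f t := by rw [hf]; ring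
    have hptle : ∀ e', pt t e' ≤ 1 := by
      intro e'
      calc pt t e' ≤ ∑ e, pt t e :=
            Finset.single_le_sum (fun e _ => (hnn e).2) (Finset.mem_univ e')
        _ = 1 := hsumpt
    have hBb : ∀ e, (B e) ^ 2 ≤ ∑ e', (q t e' e - qt t e' e) ^ 2 := by
      intro e
      have hcs := Finset.sum_mul_sq_le_sq_mul_sq Finset.univ
        (fun e' => q t e' e - qt t e' e) (fun e' => pt t e')
      have hpt2 : (∑ e', (pt t e') ^ 2) ≤ 1 := by
        rw [← hsumpt]
        refine Finset.sum_le_sum fun e' _ => ?_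
        calc (pt t e') ^ 2 = pt t e' * pt t e' := sq (pt t e') ▸ by ring
          _ ≤ 1 * pt t e' := mul_le_mul_of_nonneg_right (hptle e') (hnn e').2
          _ = pt t e' := one_mul _
      calc (B e) ^ 2 ≤ (∑ e', (q t e' e - qt t e' e) ^ 2) * ∑ e', (pt t e') ^ 2 := hcs
        _ ≤ (∑ e', (q t e' e - qt t e' e) ^ 2) * 1 := by
            refine mul_le_mul_of_nonneg_left hpt2 ?_
            exact Finset.sum_nonneg fun e' _ => sq_nonneg _
        _ = ∑ e', (q t e' e - qt t e' e) ^ 2 := mul_one _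
    have hterm2 : (∑ e, 2 * d e * B e) ≤ f t + g t := by
      have : (∑ e, 2 * d e * B e) ≤ ∑ e, ((d e) ^ 2 + ∑ e', (q t e' e - qt t e' e) ^ 2) := by
        refine Finset.sum_le_sum fun e _ => ?_
        have h2ab : 2 * d e * B e ≤ (d e) ^ 2 + (B e) ^ 2 := by nlinarith [sq_nonneg (d e - B e)]
        exact le_trans h2ab (by linarith [hBb e])
      rw [Finset.sum_add_distrib] at this
      exact this
    calc f' t = (∑ e, 2 * d e * A e) + ∑ e, 2 * d e * B e := hsplit
      _ ≤ 2 * n * qmax * f t + (f t + g t) := add_le_add hterm1 hterm2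
      _ = K * f t + g t := by rw [hK]; ring
  -- continuity facts
  have hexpc : Continuous fun t : ℝ => Real.exp (-K*t) :=
    Real.continuous_exp.comp (continuous_const.mul continuous_id)
  have hgc : ContinuousOn g (Icc 0 T) := by
    rw [hg]
    refine continuousOn_finset_sum _ fun e _ => continuousOn_finset_sum _ fun e' _ => ?_
    exact ((hqc e' e).sub (hqtc e' e)).pow 2
  have hfc : ContinuousOn f (Icc 0 T) := fun t ht => (hfd t ht).continuousWithinAt
  set φ : ℝ → ℝ := fun t => Real.exp (-K*t) * g t with hφ
  have hφc : ContinuousOn φ (Icc 0 T) := hexpc.continuousOn.mul hgc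
  have hicc : uIcc (0:ℝ) T = Icc 0 T := uIcc_of_le hT.le
  have hφint : ∀ u ∈ Icc (0:ℝ) T, IntervalIntegrable φ volume 0 u := by
    intro u hu
    apply ContinuousOn.intervalIntegrable
    apply hφc.mono
    rw [uIcc_of_le hu.1]
    exact Icc_subset_Icc le_rfl hu.2
  have hgint : ∀ u ∈ Icc (0:ℝ) T, IntervalIntegrable g volume 0 u := by
    intro u hu
    apply ContinuousOn.intervalIntegrable
    apply hgc.mono
    rw [uIcc_of_le hu.1]
    exact Icc_subset_Icc le_rfl hu.2
  set G : ℝ → ℝ := fun s => ∫ t in (0:ℝ)..s, φ t with hG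
  set h : ℝ → ℝ := fun s => Real.exp (-K*s) * f s - G s with hh
  have hhc : ContinuousOn h (Icc 0 T) := by
    refine ContinuousOn.sub (hexpc.continuousOn.mul hfc) ?_
    rw [hG]
    have := intervalIntegral.continuousOn_primitive_interval' (μ := volume)
      (b₁ := (0:ℝ)) (b₂ := T) (hφint T (right_mem_Icc.2 hT.le))
      (by rw [hicc]; exact left_mem_Icc.2 hT.le)
    rwa [hicc] at this
  set h' : ℝ → ℝ := fun t =>
    (-K * Real.exp (-K*t)) * f t + Real.exp (-K*t) * f' t - φ t with hh'
  have hderiv : ∀ t ∈ interior (Icc (0:ℝ) T),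
      HasDerivWithinAt h (h' t) (interior (Icc 0 T)) t := by
    intro t ht
    rw [interior_Icc] at ht
    have htIcc : t ∈ Icc (0:ℝ) T := Ioo_subset_Icc_self ht
    have hmem : Icc (0:ℝ) T ∈ nhds t := Icc_mem_nhds ht.1 ht.2
    have hfd' : HasDerivAt f (f' t) t := (hfd t htIcc).hasDerivAt hmem
    have hexp : HasDerivAt (fun u : ℝ => Real.exp (-K*u)) (-K * Real.exp (-K*t)) t := by
      have h1 : HasDerivAt (fun u : ℝ => -K*u) (-K) t := by
        simpa using (hasDerivAt_id t).const_mul (-K)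
      simpa [mul_comm] using h1.exp
    have hGd : HasDerivAt G (φ t) t := by
      refine intervalIntegral.integral_hasDerivAt_right (hφint t htIcc) ?_ ?_
      · have := hφc.stronglyMeasurableAtFilter_nhdsWithin (μ := volume) measurableSet_Icc t
        rwa [nhdsWithin_eq_nhds.2 hmem] at this
      · exact (hφc t htIcc).continuousAt hmem
    rw [interior_Icc]
    exact (((hexp.mul hfd').sub hGd).hasDerivWithinAt)
  have hnonpos : ∀ t ∈ interior (Icc (0:ℝ) T), h' t ≤ 0 := by
    intro t ht
    rw [interior_Icc] at ht
    have htIcc : t ∈ Icc (0:ℝ) T := Ioo_subset_Icc_self ht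
    have hk := hkey t htIcc
    have hepos : (0:ℝ) < Real.exp (-K*t) := Real.exp_pos _
    simp only [hh', hφ]
    nlinarith [mul_le_mul_of_nonneg_left hk hepos.le]
  have hanti : AntitoneOn h (Icc 0 T) :=
    antitoneOn_of_hasDerivWithinAt_nonpos (convex_Icc 0 T) hhc hderiv hnonpos
  have hh0 : h 0 = 0 := by
    rw [hh]
    simp only [hG, intervalIntegral.integral_same, hf]
    have : (∑ e, (p 0 e - pt 0 e) ^ 2) = 0 :=
      Finset.sum_eq_zero fun e _ => by rw [h0 e]; ring
    simp [this]
  have hhs : h s ≤ 0 := by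
    have := hanti (left_mem_Icc.2 hT.le) hs hs.1
    rwa [hh0] at this
  have hGφ : Real.exp (-K*s) * f s ≤ G s := by
    simp only [hh] at hhs; linarith
  have hGle : G s ≤ ∫ t in (0:ℝ)..s, g t := by
    rw [hG]
    refine intervalIntegral.integral_mono_on hs.1 (hφint s hs) (hgint s hs) fun t ht => ?_
    have h1 : Real.exp (-K*t) ≤ 1 := by
      rw [Real.exp_le_one_iff]
      have : (0:ℝ) ≤ t := ht.1
      nlinarith
    calc φ t = Real.exp (-K*t) * g t := rfl
      _ ≤ 1 * g t := mul_le_mul_of_nonneg_right h1 (hgnonneg t)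
      _ = g t := one_mul _
  have hintnn : (0:ℝ) ≤ ∫ t in (0:ℝ)..s, g t :=
    intervalIntegral.integral_nonneg hs.1 fun t _ => hgnonneg t
  have hfinal : f s ≤ Real.exp (K*T) * ∫ t in (0:ℝ)..s, g t := by
    have h1 : f s = Real.exp (K*s) * (Real.exp (-K*s) * f s) := by
      rw [← mul_assoc, ← Real.exp_add]
      simp
    have h2 : Real.exp (K*s) ≤ Real.exp (K*T) :=
      Real.exp_le_exp.2 (mul_le_mul_of_nonneg_left hs.2 hKpos.le)
    calc f s = Real.exp (K*s) * (Real.exp (-K*s) * f s) := h1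
      _ ≤ Real.exp (K*s) * G s :=
          mul_le_mul_of_nonneg_left hGφ (Real.exp_pos _).le
      _ ≤ Real.exp (K*s) * ∫ t in (0:ℝ)..s, g t := by
          refine mul_le_mul_of_nonneg_left hGle (Real.exp_pos _).le
      _ ≤ Real.exp (K*T) * ∫ t in (0:ℝ)..s, g t :=
          mul_le_mul_of_nonneg_right h2 hintnn
  exact hfinal

instance : IsFiniteMeasure muI :=
  ⟨by rw [muI, Measure.restrict_apply_univ]; exact measure_Icc_lt_top⟩

/-- L² stability of the Kolmogorov forward equation with respect to the rates: there is a
constant `C`, depending only on `n`, `q_max` and `T`, such that two solution flows with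
rates `q`, `q̃` (both bounded by `q_max`), the same initial datum, and probability-vector
values satisfy
`∫_I Σ_e |p^x(s,e) − p̃^x(s,e)|² dx ≤ C ∫₀^s ∫_I Σ_{e,e'} |q^x_{e',e}(t) − q̃^x_{e',e}(t)|² dx dt`. -/
theorem stmt_15 (n : ℕ) (hn : 2 ≤ n) (T qmax : ℝ) (hT : 0 < T) :
    ∃ C : ℝ, ∀ (q qt : ℝ → ℝ → Fin n → Fin n → ℝ)   -- q x t e' e  and  q̃ x t e' e
      (p pt : ℝ → ℝ → Fin n → ℝ) (p0 : ℝ → Fin n → ℝ),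
      (∀ e' e, Measurable fun v : ℝ × ℝ => q v.1 v.2 e' e) →
      (∀ e' e, Measurable fun v : ℝ × ℝ => qt v.1 v.2 e' e) →
      (∀ x t e' e, |q x t e' e| ≤ qmax) →
      (∀ x t e' e, |qt x t e' e| ≤ qmax) →
      (∀ᵐ x ∂muI, ∀ e' e, ContinuousOn (fun t => q x t e' e) (Icc 0 T) ∧
        ContinuousOn (fun t => qt x t e' e) (Icc 0 T)) →
      (∀ t ∈ Icc (0:ℝ) T, ∀ e, AEMeasurable (fun x => p x t e) muI ∧
        AEMeasurable (fun x => pt x t e) muI) →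
      (∀ᵐ x ∂muI, ∀ t ∈ Icc (0:ℝ) T, ∀ e,
        HasDerivWithinAt (fun s => p x s e) (∑ e', q x t e' e * p x t e') (Icc 0 T) t ∧
        HasDerivWithinAt (fun s => pt x s e) (∑ e', qt x t e' e * pt x t e') (Icc 0 T) t) →
      (∀ᵐ x ∂muI, ∀ e, p x 0 e = p0 x e ∧ pt x 0 e = p0 x e) →
      (∀ᵐ x ∂muI, ∀ t ∈ Icc (0:ℝ) T,
        (∀ e, 0 ≤ p x t e ∧ 0 ≤ pt x t e) ∧ ∑ e, p x t e = 1 ∧ ∑ e, pt x t e = 1) →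
      ∀ s ∈ Icc (0:ℝ) T,
        (∫ x, ∑ e, (p x s e - pt x s e) ^ 2 ∂muI)
          ≤ C * ∫ t in (0:ℝ)..s, ∫ x, ∑ e, ∑ e', (q x t e' e - qt x t e' e) ^ 2 ∂muI := by
  classical
  refine ⟨Real.exp ((2*n*qmax+1)*T), ?_⟩
  intro q qt p pt p0 hqm hqtm hqb hqtb hqcont hpmeas hderiv h0 hprob s hs
  have hn0 : 0 < n := lt_of_lt_of_le two_pos hn
  have hq0 : 0 ≤ qmax := le_trans (abs_nonneg _) (hqb 0 0 ⟨0, hn0⟩ ⟨0, hn0⟩)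
  set C : ℝ := Real.exp ((2*n*qmax+1)*T) with hC
  have hCpos : 0 < C := Real.exp_pos _
  set gfun : ℝ → ℝ → ℝ := fun x t => ∑ e, ∑ e', (q x t e' e - qt x t e' e) ^ 2 with hgfun
  set F : ℝ → ℝ := fun x => ∑ e, (p x s e - pt x s e) ^ 2 with hF
  set Gb : ℝ → ℝ := fun x => ∫ t in (0:ℝ)..s, gfun x t with hGb
  -- a.e. pointwise Grönwall estimate
  have hae : ∀ᵐ x ∂muI, F x ≤ C * Gb x := by
    filter_upwards [hqcont, hderiv, h0, hprob] with x hx1 hx2 hx3 hx4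
    exact perx_gronwall hn0 hT hq0 (q x) (qt x) (p x) (pt x)
      (fun t e' e => hqb x t e' e) (fun t e' e => hqtb x t e' e)
      (fun e' e => (hx1 e' e).1) (fun e' e => (hx1 e' e).2)
      (fun t ht e => (hx2 t ht e).1) (fun t ht e => (hx2 t ht e).2)
      (fun e => by rw [(hx3 e).1, (hx3 e).2]) hx4 s hs
  -- integrability of F
  have hFmeas : AEMeasurable F muI := by
    refine Finset.aemeasurable_fun_sum _ fun e _ => ?_
    exact (((hpmeas s hs e).1.sub (hpmeas s hs e).2).pow_const 2)
  have hFnonneg : ∀ x, 0 ≤ F x := fun x => Finset.sum_nonneg fun e _ => sq_nonneg _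
  have hFbdd : ∀ᵐ x ∂muI, ‖F x‖ ≤ (n:ℝ) := by
    filter_upwards [hprob] with x hx
    obtain ⟨hnn, hsp, hspt⟩ := hx s hs
    rw [Real.norm_eq_abs, abs_of_nonneg (hFnonneg x)]
    have hb : ∀ e, (p x s e - pt x s e) ^ 2 ≤ 1 := by
      intro e
      have h1 : p x s e ≤ 1 := by
        calc p x s e ≤ ∑ e', p x s e' :=
            Finset.single_le_sum (fun e' _ => (hnn e').1) (Finset.mem_univ e)
          _ = 1 := hsp
      have h2 : pt x s e ≤ 1 := by
        calc pt x s e ≤ ∑ e', pt x s e' :=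
            Finset.single_le_sum (fun e' _ => (hnn e').2) (Finset.mem_univ e)
          _ = 1 := hspt
      nlinarith [(hnn e).1, (hnn e).2]
    calc F x ≤ ∑ _e : Fin n, (1:ℝ) := Finset.sum_le_sum fun e _ => hb e
      _ = n := by simp
  have hFint : Integrable F muI :=
    Integrable.mono' (integrable_const (n:ℝ)) hFmeas.aestronglyMeasurable hFbdd
  -- measurability and bounds for gfun
  have hgmeas : Measurable fun v : ℝ × ℝ => gfun v.1 v.2 := by
    refine Finset.measurable_sum _ fun e _ => Finset.measurable_sum _ fun e' _ => ?_
    exact ((hqm e' e).sub (hqtm e' e)).pow_const 2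
  set M : ℝ := n * (n * (2*qmax)^2) with hM
  have hgb : ∀ x t, gfun x t ≤ M := by
    intro x t
    have hterm : ∀ e e', (q x t e' e - qt x t e' e) ^ 2 ≤ (2*qmax)^2 := by
      intro e e'
      have h1 : |q x t e' e - qt x t e' e| ≤ 2*qmax := by
        calc |q x t e' e - qt x t e' e| ≤ |q x t e' e| + |qt x t e' e| := abs_sub _ _
          _ ≤ qmax + qmax := add_le_add (hqb x t e' e) (hqtb x t e' e)
          _ = 2*qmax := by ring
      calc (q x t e' e - qt x t e' e) ^ 2 = |q x t e' e - qt x t e' e| ^ 2 := (sq_abs _).symm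
        _ ≤ (2*qmax)^2 := pow_le_pow_left₀ (abs_nonneg _) h1 2
    calc gfun x t ≤ ∑ _e : Fin n, ∑ _e' : Fin n, (2*qmax)^2 :=
        Finset.sum_le_sum fun e _ => Finset.sum_le_sum fun e' _ => hterm e e'
      _ = M := by simp [hM]
  have hgnonneg : ∀ x t, 0 ≤ gfun x t :=
    fun x t => Finset.sum_nonneg fun e _ => Finset.sum_nonneg fun e' _ => sq_nonneg _
  have hMnn : 0 ≤ M := le_trans (hgnonneg 0 0) (hgb 0 0)
  -- the time-restricted measure
  set ν : Measure ℝ := volume.restrict (Ioc 0 s) with hν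
  haveI : IsFiniteMeasure ν :=
    ⟨by rw [hν, Measure.restrict_apply_univ]; exact measure_Ioc_lt_top⟩
  have hGbeq : Gb = fun x => ∫ t, gfun x t ∂ν := by
    funext x
    show (∫ t in (0:ℝ)..s, gfun x t) = ∫ t, gfun x t ∂ν
    rw [intervalIntegral.integral_of_le hs.1, hν]
  -- measurability of Gb
  have hGmeas : Measurable Gb := by
    rw [hGbeq]
    have hgu : Measurable (Function.uncurry gfun) := by
      simpa [Function.uncurry_def] using hgmeas
    exact (hgu.stronglyMeasurable.integral_prod_right (ν := ν)).measurable
  have hGbdd : ∀ x, ‖Gb x‖ ≤ M * T := by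
    intro x
    have := intervalIntegral.norm_integral_le_of_norm_le_const (C := M)
      (f := fun t => gfun x t) (a := 0) (b := s) (fun t _ => by
        rw [Real.norm_eq_abs, abs_of_nonneg (hgnonneg x t)]; exact hgb x t)
    rw [hGb]
    refine le_trans this ?_
    have : |s - 0| = s := by rw [sub_zero, abs_of_nonneg hs.1]
    rw [this]
    exact mul_le_mul_of_nonneg_left hs.2 hMnn
  have hGint : Integrable Gb muI :=
    Integrable.mono' (integrable_const (M*T)) hGmeas.aestronglyMeasurable
      (Filter.Eventually.of_forall hGbdd)
  -- main chain
  have step1 : (∫ x, F x ∂muI) ≤ ∫ x, C * Gb x ∂muI :=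
    integral_mono_ae hFint (hGint.const_mul C) hae
  have step2 : (∫ x, C * Gb x ∂muI) = C * ∫ x, Gb x ∂muI := integral_const_mul _ _
  -- swap the integrals
  have hintprod : Integrable (Function.uncurry gfun) (muI.prod ν) := by
    refine Integrable.mono' (integrable_const M) ?_ ?_
    · have hgu : Measurable (Function.uncurry gfun) := by
        simpa [Function.uncurry_def] using hgmeas
      exact hgu.aestronglyMeasurable
    · refine Filter.Eventually.of_forall fun v => ?_
      show ‖gfun v.1 v.2‖ ≤ M
      rw [Real.norm_eq_abs, abs_of_nonneg (hgnonneg v.1 v.2)]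
      exact hgb v.1 v.2
  have hswap : (∫ x, Gb x ∂muI) = ∫ t, (∫ x, gfun x t ∂muI) ∂ν := by
    rw [hGbeq]
    exact integral_integral_swap hintprod
  have hback : (∫ t, (∫ x, gfun x t ∂muI) ∂ν)
      = ∫ t in (0:ℝ)..s, ∫ x, gfun x t ∂muI := by
    rw [intervalIntegral.integral_of_le hs.1, hν]
  calc (∫ x, F x ∂muI) ≤ ∫ x, C * Gb x ∂muI := step1
    _ = C * ∫ x, Gb x ∂muI := step2
    _ = C * ∫ t in (0:ℝ)..s, ∫ x, gfun x t ∂muI := by rw [hswap, hback]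
end
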